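/- arXiv:1701.05102 — 2 statements merged into one kernel-verified Lean document; each statement's English description precedes it below -/
import Mathlib

section
/- Let a, c, d be positive integers and set b = 1. For the pair (X, Oz) associated to the real surface V = {(x,y,z) ∈ ℝ³ : y^a = z·x^c + x^d}, Whitney (a)-regularity at the origin holds if and only if Whitney (b)-regularity at the origin holds; indeed both are equivalent to (a = 1 or d ≤ c). -/
open Filter

noncomputable section

/-- x-partial derivative of f(x,y,z) = y^a - z^b*x^c - x^d. -/
def fxR (b c d : ℕ) (x z : ℝ) : ℝ :=
  -(c : ℝ) * z ^ b * x ^ (c - 1) - (d : ℝ) * x ^ (d - 1)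

/-- y-partial derivative of f. -/
def fyR (a : ℕ) (y : ℝ) : ℝ := (a : ℝ) * y ^ (a - 1)

/-- z-partial derivative of f. -/
def fzR (b c : ℕ) (x z : ℝ) : ℝ := -(b : ℝ) * z ^ (b - 1) * x ^ c

/-- Euclidean norm on ℝ³. -/
def nrm3R (u v w : ℝ) : ℝ := Real.sqrt (u ^ 2 + v ^ 2 + w ^ 2)

/-- Euclidean norm on ℝ². -/
def nrm2R (u v : ℝ) : ℝ := Real.sqrt (u ^ 2 + v ^ 2)

/-- Norm of the gradient ∇f(x,y,z). -/
def gradNormR (a b c d : ℕ) (x y z : ℝ) : ℝ :=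
  nrm3R (fxR b c d x z) (fyR a y) (fzR b c x z)

/-- The gradient ∇f(x,y,z) is nonzero. -/
def gradNeR (a b c d : ℕ) (x y z : ℝ) : Prop :=
  ¬ (fxR b c d x z = 0 ∧ fyR a y = 0 ∧ fzR b c x z = 0)

/-- Membership in X = V \ Oz, where V = {y^a = z^b x^c + x^d} and Oz is the z-axis. -/
def inXR (a b c d : ℕ) (x y z : ℝ) : Prop :=
  y ^ a = z ^ b * x ^ c + x ^ d ∧ ¬ (x = 0 ∧ y = 0)

/-- Whitney (a)-regularity of the pair (X, Oz) at the origin. -/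
def aRegR (a b c d : ℕ) : Prop :=
  ∀ x y z : ℕ → ℝ,
    (∀ n, inXR a b c d (x n) (y n) (z n)) →
    Tendsto (fun n => (x n, y n, z n)) atTop (nhds ((0 : ℝ), (0 : ℝ), (0 : ℝ))) →
    (∀ n, gradNeR a b c d (x n) (y n) (z n)) →
    Tendsto (fun n => |fzR b c (x n) (z n)| / gradNormR a b c d (x n) (y n) (z n))
      atTop (nhds 0)

/-- The (bᵖⁱ) condition for the retraction π(x,y,z) = (0,0,z). -/
def bpiR (a b c d : ℕ) : Prop :=
  ∀ x y z : ℕ → ℝ,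
    (∀ n, inXR a b c d (x n) (y n) (z n)) →
    Tendsto (fun n => (x n, y n, z n)) atTop (nhds ((0 : ℝ), (0 : ℝ), (0 : ℝ))) →
    (∀ n, gradNeR a b c d (x n) (y n) (z n)) →
    Tendsto (fun n => |x n * fxR b c d (x n) (z n) + y n * fyR a (y n)| /
        (nrm2R (x n) (y n) * gradNormR a b c d (x n) (y n) (z n)))
      atTop (nhds 0)

/-- Whitney (b)-regularity of the pair (X, Oz) at the origin. -/
def bRegR (a b c d : ℕ) : Prop := aRegR a b c d ∧ bpiR a b c d

/-- Kuo–Verdier (w)-regularity of the pair (X, Oz) at the origin. -/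
def wRegR (a b c d : ℕ) : Prop :=
  ∃ C : ℝ, 0 < C ∧ ∃ ε : ℝ, 0 < ε ∧ ∀ x y z : ℝ,
    inXR a b c d x y z → nrm3R x y z < ε → gradNeR a b c d x y z →
    |fzR b c x z| ≤ C * nrm2R x y * gradNormR a b c d x y z

-- HELPERS

lemma nrm3R_nonneg (u v w : ℝ) : 0 ≤ nrm3R u v w := Real.sqrt_nonneg _
lemma nrm2R_nonneg (u v : ℝ) : 0 ≤ nrm2R u v := Real.sqrt_nonneg _

lemma abs_le_nrm3R₁ (u v w : ℝ) : |u| ≤ nrm3R u v w := by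
  rw [nrm3R, ← Real.sqrt_sq_eq_abs]
  exact Real.sqrt_le_sqrt (by nlinarith [sq_nonneg v, sq_nonneg w])

lemma abs_le_nrm3R₂ (u v w : ℝ) : |v| ≤ nrm3R u v w := by
  rw [nrm3R, ← Real.sqrt_sq_eq_abs]
  exact Real.sqrt_le_sqrt (by nlinarith [sq_nonneg u, sq_nonneg w])

lemma abs_le_nrm2R₁ (u v : ℝ) : |u| ≤ nrm2R u v := by
  rw [nrm2R, ← Real.sqrt_sq_eq_abs]
  exact Real.sqrt_le_sqrt (by nlinarith [sq_nonneg v])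

lemma abs_le_nrm2R₂ (u v : ℝ) : |v| ≤ nrm2R u v := by
  rw [nrm2R, ← Real.sqrt_sq_eq_abs]
  exact Real.sqrt_le_sqrt (by nlinarith [sq_nonneg u])

lemma gradNormR_nonneg (a b c d : ℕ) (x y z : ℝ) : 0 ≤ gradNormR a b c d x y z :=
  Real.sqrt_nonneg _

lemma abs_fx_le_grad (a b c d : ℕ) (x y z : ℝ) :
    |fxR b c d x z| ≤ gradNormR a b c d x y z := abs_le_nrm3R₁ _ _ _

lemma abs_fy_le_grad (a b c d : ℕ) (x y z : ℝ) :
    |fyR a y| ≤ gradNormR a b c d x y z := abs_le_nrm3R₂ _ _ _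

lemma abs_le_nrm3R₃ (u v w : ℝ) : |w| ≤ nrm3R u v w := by
  rw [nrm3R, ← Real.sqrt_sq_eq_abs]
  exact Real.sqrt_le_sqrt (by nlinarith [sq_nonneg u, sq_nonneg v])

lemma abs_fz_le_grad (a b c d : ℕ) (x y z : ℝ) :
    |fzR b c x z| ≤ gradNormR a b c d x y z := abs_le_nrm3R₃ _ _ _

lemma tendsto_zero_of_pow {u : ℕ → ℝ} (hu : ∀ n, 0 ≤ u n) {m : ℕ} (hm : 0 < m)
    (h : Tendsto (fun n => u n ^ m) atTop (nhds 0)) : Tendsto u atTop (nhds 0) := by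
  rw [NormedAddCommGroup.tendsto_nhds_zero] at h ⊢
  intro ε hε
  filter_upwards [h (ε ^ m) (by positivity)] with n hn
  rw [Real.norm_eq_abs, abs_of_nonneg (pow_nonneg (hu n) m)] at hn
  rw [Real.norm_eq_abs, abs_of_nonneg (hu n)]
  by_contra hle
  push_neg at hle
  exact absurd hn (not_lt.2 (pow_le_pow_left₀ hε.le hle m))

lemma nat_exp_id {a d : ℕ} (ha : 1 ≤ a) (had : a ≤ d) :
    (d - 1) * a = d * (a - 1) + (d - a) := by
  obtain ⟨a', rfl⟩ : ∃ a', a = a' + 1 := ⟨a - 1, by omega⟩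
  obtain ⟨e, rfl⟩ : ∃ e, d = a' + 1 + e := ⟨d - (a' + 1), by omega⟩
  have h1 : a' + 1 + e - 1 = a' + e := by omega
  have h2 : a' + 1 - 1 = a' := by omega
  have h3 : a' + 1 + e - (a' + 1) = e := by omega
  rw [h1, h2, h3]
  ring

-- On X, x ≠ 0.
lemma x_ne_zero {a b c d : ℕ} (ha : 0 < a) (hc : 0 < c) (hd : 0 < d)
    {x y z : ℝ} (h : inXR a b c d x y z) : x ≠ 0 := by
  intro hx
  rcases h with ⟨heq, hne⟩
  apply hne
  refine ⟨hx, ?_⟩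
  have : y ^ a = 0 := by
    rw [heq, hx, zero_pow hc.ne', zero_pow hd.ne']; ring
  exact (pow_eq_zero_iff ha.ne').mp this

lemma abs_fz_one (c : ℕ) (x z : ℝ) : |fzR 1 c x z| = |x| ^ c := by
  simp [fzR, abs_pow]

lemma abs_fy_eq (a : ℕ) (y : ℝ) : |fyR a y| = (a : ℝ) * |y| ^ (a - 1) := by
  rw [fyR, abs_mul, abs_pow, Nat.abs_cast]

-- lower bound on |fx| in the case d ≤ c
lemma fx_lower {c d : ℕ} (hc : 0 < c) (hd : 0 < d) (hdc : d ≤ c) {x z : ℝ}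
    (hx1 : |x| ≤ 1) (hz : |z| ≤ (d : ℝ) / (2 * c)) :
    (d : ℝ) / 2 * |x| ^ (d - 1) ≤ |fxR 1 c d x z| := by
  have hfx : fxR 1 c d x z = -((c : ℝ) * z * x ^ (c - 1) + (d : ℝ) * x ^ (d - 1)) := by
    simp [fxR]; ring
  rw [hfx, abs_neg]
  have h1 : |(d : ℝ) * x ^ (d - 1)| - |(c : ℝ) * z * x ^ (c - 1)| ≤
      |(c : ℝ) * z * x ^ (c - 1) + (d : ℝ) * x ^ (d - 1)| := by
    have := abs_sub_abs_le_abs_sub ((d : ℝ) * x ^ (d - 1)) (-((c : ℝ) * z * x ^ (c - 1)))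
    rw [abs_neg, sub_neg_eq_add] at this
    rw [add_comm]
    exact this
  have h2 : |(d : ℝ) * x ^ (d - 1)| = (d : ℝ) * |x| ^ (d - 1) := by
    rw [abs_mul, abs_pow, Nat.abs_cast]
  have h3 : |(c : ℝ) * z * x ^ (c - 1)| ≤ (d : ℝ) / 2 * |x| ^ (d - 1) := by
    rw [abs_mul, abs_mul, abs_pow, Nat.abs_cast]
    have hp : |x| ^ (c - 1) ≤ |x| ^ (d - 1) :=
      pow_le_pow_of_le_one (abs_nonneg _) hx1 (Nat.sub_le_sub_right hdc 1)
    calc (c : ℝ) * |z| * |x| ^ (c - 1) ≤ (c : ℝ) * |z| * |x| ^ (d - 1) :=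
          mul_le_mul_of_nonneg_left hp (by positivity)
      _ ≤ (c : ℝ) * ((d : ℝ) / (2 * c)) * |x| ^ (d - 1) :=
          mul_le_mul_of_nonneg_right (mul_le_mul_of_nonneg_left hz (by positivity)) (by positivity)
      _ = (d : ℝ) / 2 * |x| ^ (d - 1) := by
          have : (c : ℝ) ≠ 0 := Nat.cast_ne_zero.2 hc.ne'
          field_simp
  linarith

-- extraction of component limits
lemma tendsto_components {x y z : ℕ → ℝ}
    (hlim : Tendsto (fun n => (x n, y n, z n)) atTop (nhds ((0:ℝ), (0:ℝ), (0:ℝ)))) :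
    Tendsto x atTop (nhds 0) ∧ Tendsto y atTop (nhds 0) ∧ Tendsto z atTop (nhds 0) := by
  refine ⟨?_, ?_, ?_⟩
  · simpa [Function.comp_def] using (continuous_fst.tendsto ((0:ℝ), ((0:ℝ), (0:ℝ)))).comp hlim
  · simpa [Function.comp_def] using ((continuous_fst.comp continuous_snd).tendsto ((0:ℝ), ((0:ℝ), (0:ℝ)))).comp hlim
  · simpa [Function.comp_def] using ((continuous_snd.comp continuous_snd).tendsto ((0:ℝ), ((0:ℝ), (0:ℝ)))).comp hlim

lemma suffA {a c d : ℕ} (ha : 0 < a) (hc : 0 < c) (hd : 0 < d)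
    (h : a = 1 ∨ d ≤ c) : aRegR a 1 c d := by
  intro x y z hX hlim _
  obtain ⟨tx, ty, tz⟩ := tendsto_components hlim
  have txa : Tendsto (fun n => |x n|) atTop (nhds 0) := by simpa using tx.abs
  have tza : Tendsto (fun n => |z n|) atTop (nhds 0) := by simpa using tz.abs
  have hx0 : ∀ n, x n ≠ 0 := fun n => x_ne_zero ha hc hd (hX n)
  rcases h with h1 | hdc
  · -- a = 1 : the gradient norm is at least 1
    subst h1
    apply squeeze_zero (f := fun n => |fzR 1 c (x n) (z n)| / gradNormR 1 1 c d (x n) (y n) (z n))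
      (g := fun n => |x n| ^ c)
    · intro n
      exact div_nonneg (abs_nonneg _) (gradNormR_nonneg _ _ _ _ _ _ _)
    · intro n
      have hg1 : (1 : ℝ) ≤ gradNormR 1 1 c d (x n) (y n) (z n) := by
        have := abs_fy_le_grad 1 1 c d (x n) (y n) (z n)
        simpa [fyR] using this
      calc |fzR 1 c (x n) (z n)| / gradNormR 1 1 c d (x n) (y n) (z n)
          ≤ |fzR 1 c (x n) (z n)| := div_le_self (abs_nonneg _) hg1
        _ = |x n| ^ c := abs_fz_one c (x n) (z n)
    · have := txa.pow c
      simpa [zero_pow hc.ne'] using this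
  · -- d ≤ c
    apply squeeze_zero'
      (f := fun n => |fzR 1 c (x n) (z n)| / gradNormR a 1 c d (x n) (y n) (z n))
      (g := fun n => 2 / (d : ℝ) * |x n| ^ (c + 1 - d))
    · exact Eventually.of_forall fun n =>
        div_nonneg (abs_nonneg _) (gradNormR_nonneg _ _ _ _ _ _ _)
    · filter_upwards [txa.eventually_le_const (show (0:ℝ) < 1 by norm_num),
        tza.eventually_le_const (show (0:ℝ) < (d : ℝ) / (2 * c) by positivity)]
        with n hx1 hz
      have hfx := fx_lower hc hd hdc hx1 hz
      have hgrad : (d : ℝ) / 2 * |x n| ^ (d - 1) ≤ gradNormR a 1 c d (x n) (y n) (z n) :=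
        le_trans hfx (abs_fx_le_grad a 1 c d (x n) (y n) (z n))
      have hxpos : 0 < |x n| := abs_pos.2 (hx0 n)
      have hdenpos : 0 < (d : ℝ) / 2 * |x n| ^ (d - 1) := by positivity
      calc |fzR 1 c (x n) (z n)| / gradNormR a 1 c d (x n) (y n) (z n)
          ≤ (|x n| ^ c) / ((d : ℝ) / 2 * |x n| ^ (d - 1)) := by
            rw [abs_fz_one]
            exact div_le_div₀ (by positivity) le_rfl hdenpos hgrad
        _ = 2 / (d : ℝ) * |x n| ^ (c + 1 - d) := by
            have hsplit : |x n| ^ c = |x n| ^ (d - 1) * |x n| ^ (c + 1 - d) := by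
              rw [← pow_add]; congr 1; omega
            rw [hsplit]
            have hne : |x n| ^ (d - 1) ≠ 0 := by positivity
            have hdne : (d : ℝ) ≠ 0 := Nat.cast_ne_zero.2 hd.ne'
            field_simp
    · have := (txa.pow (c + 1 - d)).const_mul (2 / (d : ℝ))
      simpa [zero_pow (show c + 1 - d ≠ 0 by omega)] using this

set_option maxHeartbeats 1000000 in
lemma necA {a c d : ℕ} (ha : 0 < a) (hc : 0 < c) (hd : 0 < d)
    (hA : aRegR a 1 c d) : a = 1 ∨ d ≤ c := by
  by_contra hcon
  push_neg at hcon
  obtain ⟨ha1, hcd⟩ := hcon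
  have ha2 : 2 ≤ a := by omega
  set u : ℕ → ℝ := fun n => 1 / (n + 1) with hu
  have hupos : ∀ n, 0 < u n := fun n => by positivity
  have hule : ∀ n, u n ≤ 1 := by
    intro n
    rw [hu, div_le_one (by positivity)]
    simp
  set y : ℕ → ℝ := fun _ => (0 : ℝ) with hy
  set z : ℕ → ℝ := fun n => -(u n ^ (d - c)) with hz
  have tu : Tendsto u atTop (nhds 0) := tendsto_one_div_add_atTop_nhds_zero_nat
  have hXseq : ∀ n, inXR a 1 c d (u n) (y n) (z n) := by
    intro n
    constructor
    · have e : u n ^ (d - c) * u n ^ c = u n ^ d := by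
        rw [← pow_add]; congr 1; omega
      simp only [hy, hz, pow_one]
      rw [zero_pow ha.ne', neg_mul, e]
      ring
    · intro hcon2
      exact absurd hcon2.1 (hupos n).ne'
  have hlim : Tendsto (fun n => (u n, y n, z n)) atTop (nhds ((0:ℝ), (0:ℝ), (0:ℝ))) := by
    refine Tendsto.prodMk_nhds tu (Tendsto.prodMk_nhds tendsto_const_nhds ?_)
    have := (tu.pow (d - c)).neg
    simpa [zero_pow (show d - c ≠ 0 by omega)] using this
  have hgradne : ∀ n, gradNeR a 1 c d (u n) (y n) (z n) := by
    intro n hcon2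
    have hfz : fzR 1 c (u n) (z n) = -(u n ^ c) := by simp [fzR]
    rw [hfz] at hcon2
    have h0 : u n ^ c = 0 := by linarith [hcon2.2.2]
    exact absurd ((pow_eq_zero_iff hc.ne').mp h0) (hupos n).ne'
  have hten := hA u y z hXseq hlim hgradne
  set K : ℝ := Real.sqrt (((c : ℝ) - d) ^ 2 + 1) with hK
  have hKpos : 0 < K := Real.sqrt_pos.2 (by positivity)
  have hlow : ∀ n, 1 / K ≤ |fzR 1 c (u n) (z n)| / gradNormR a 1 c d (u n) (y n) (z n) := by
    intro n
    have hxpos := hupos n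
    have hfz : |fzR 1 c (u n) (z n)| = u n ^ c := by
      rw [abs_fz_one, abs_of_pos hxpos]
    have e : u n ^ (d - c) * u n ^ (c - 1) = u n ^ (d - 1) := by
      rw [← pow_add]; congr 1; omega
    have hfx : fxR 1 c d (u n) (z n) = ((c : ℝ) - d) * u n ^ (d - 1) := by
      simp only [fxR, hz, pow_one]
      rw [show -(c : ℝ) * -(u n ^ (d - c)) * u n ^ (c - 1)
          = (c : ℝ) * (u n ^ (d - c) * u n ^ (c - 1)) by ring, e]
      ring
    have hfy : fyR a (y n) = 0 := by
      simp [fyR, hy, zero_pow (show a - 1 ≠ 0 by omega)]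
    have hgradle : gradNormR a 1 c d (u n) (y n) (z n) ≤ K * u n ^ c := by
      rw [gradNormR, nrm3R, hfx, hfy]
      have hfz2 : fzR 1 c (u n) (z n) = -(u n ^ c) := by simp [fzR]
      rw [hfz2]
      have hpow : u n ^ (d - 1) ≤ u n ^ c :=
        pow_le_pow_of_le_one (hupos n).le (hule n) (by omega)
      have h1 : (u n ^ (d - 1)) ^ 2 ≤ (u n ^ c) ^ 2 :=
        pow_le_pow_left₀ (by positivity) hpow 2
      have hb : (((c : ℝ) - d) * u n ^ (d - 1)) ^ 2 + 0 ^ 2 + (-(u n ^ c)) ^ 2 ≤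
          (((c : ℝ) - d) ^ 2 + 1) * (u n ^ c) ^ 2 := by
        nlinarith [sq_nonneg ((c:ℝ) - d)]
      calc Real.sqrt ((((c : ℝ) - d) * u n ^ (d - 1)) ^ 2 + 0 ^ 2 + (-(u n ^ c)) ^ 2)
          ≤ Real.sqrt ((((c : ℝ) - d) ^ 2 + 1) * (u n ^ c) ^ 2) := Real.sqrt_le_sqrt hb
        _ = K * u n ^ c := by
            rw [Real.sqrt_mul (by positivity), Real.sqrt_sq (by positivity)]
    have hgradpos : 0 < gradNormR a 1 c d (u n) (y n) (z n) := by
      calc (0:ℝ) < |fzR 1 c (u n) (z n)| := by rw [hfz]; positivity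
        _ ≤ gradNormR a 1 c d (u n) (y n) (z n) := abs_fz_le_grad a 1 c d (u n) (y n) (z n)
    rw [hfz, div_le_div_iff₀ hKpos hgradpos]
    calc 1 * gradNormR a 1 c d (u n) (y n) (z n)
        = gradNormR a 1 c d (u n) (y n) (z n) := one_mul _
      _ ≤ K * u n ^ c := hgradle
      _ = u n ^ c * K := by ring
  have hev : ∀ᶠ n in atTop,
      |fzR 1 c (u n) (z n)| / gradNormR a 1 c d (u n) (y n) (z n) < 1 / K :=
    hten.eventually_lt_const (by positivity)
  obtain ⟨n, hn⟩ := hev.exists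
  exact absurd (hlow n) (not_le.2 hn)

lemma mul_pow_sub_one' {k : ℕ} (hk : k ≠ 0) (t : ℝ) : t * t ^ (k - 1) = t ^ k := by
  conv_rhs => rw [show k = (k - 1) + 1 by omega]
  rw [pow_succ]; ring

set_option maxHeartbeats 2000000 in
lemma suffB {a c d : ℕ} (ha : 0 < a) (hc : 0 < c) (hd : 0 < d)
    (h : a = 1 ∨ d ≤ c) : bpiR a 1 c d := by
  intro x y z hX hlim _
  obtain ⟨tx, ty, tz⟩ := tendsto_components hlim
  have txa : Tendsto (fun n => |x n|) atTop (nhds 0) := by simpa using tx.abs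
  have tza : Tendsto (fun n => |z n|) atTop (nhds 0) := by simpa using tz.abs
  have hx0 : ∀ n, x n ≠ 0 := fun n => x_ne_zero ha hc hd (hX n)
  have hnum : ∀ n, x n * fxR 1 c d (x n) (z n) + y n * fyR a (y n)
      = ((a : ℝ) - c) * z n * x n ^ c + ((a : ℝ) - d) * x n ^ d := by
    intro n
    have h1 := mul_pow_sub_one' hc.ne' (x n)
    have h2 := mul_pow_sub_one' hd.ne' (x n)
    have h3 := mul_pow_sub_one' ha.ne' (y n)
    have expand : x n * fxR 1 c d (x n) (z n) + y n * fyR a (y n)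
        = -(c : ℝ) * z n * (x n * x n ^ (c - 1)) - (d : ℝ) * (x n * x n ^ (d - 1))
          + (a : ℝ) * (y n * y n ^ (a - 1)) := by
      simp only [fxR, fyR, pow_one]; ring
    rw [expand, h1, h2, h3]
    have hy := (hX n).1
    rw [pow_one] at hy
    rw [hy]
    ring
  rcases h with h1 | hdc
  · -- a = 1
    subst h1
    apply squeeze_zero'
      (g := fun n => |(1 : ℝ) - c| * |z n| * |x n| ^ (c - 1) + |(1 : ℝ) - d| * |x n| ^ (d - 1))
    · exact Eventually.of_forall fun n => div_nonneg (abs_nonneg _)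
        (mul_nonneg (nrm2R_nonneg _ _) (gradNormR_nonneg _ _ _ _ _ _ _))
    · refine Eventually.of_forall fun n => ?_
      have hxpos : 0 < |x n| := abs_pos.2 (hx0 n)
      have hg1 : (1 : ℝ) ≤ gradNormR 1 1 c d (x n) (y n) (z n) := by
        have := abs_fy_le_grad 1 1 c d (x n) (y n) (z n)
        simpa [fyR] using this
      have hD : |x n| * 1 ≤ nrm2R (x n) (y n) * gradNormR 1 1 c d (x n) (y n) (z n) :=
        mul_le_mul (abs_le_nrm2R₁ _ _) hg1 zero_le_one (nrm2R_nonneg _ _)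
      have habs : |x n * fxR 1 c d (x n) (z n) + y n * fyR 1 (y n)|
          ≤ |(1 : ℝ) - c| * |z n| * |x n| ^ c + |(1 : ℝ) - d| * |x n| ^ d := by
        rw [hnum n]
        refine (abs_add_le _ _).trans ?_
        rw [abs_mul, abs_mul, abs_mul, abs_pow, abs_pow]
        norm_num
      calc |x n * fxR 1 c d (x n) (z n) + y n * fyR 1 (y n)| /
            (nrm2R (x n) (y n) * gradNormR 1 1 c d (x n) (y n) (z n))
          ≤ (|(1 : ℝ) - c| * |z n| * |x n| ^ c + |(1 : ℝ) - d| * |x n| ^ d) / (|x n| * 1) :=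
            div_le_div₀ (by positivity) habs (by positivity) hD
        _ = |(1 : ℝ) - c| * |z n| * |x n| ^ (c - 1) + |(1 : ℝ) - d| * |x n| ^ (d - 1) := by
            rw [← mul_pow_sub_one' hc.ne' (|x n|), ← mul_pow_sub_one' hd.ne' (|x n|)]
            field_simp
    · have t1 : Tendsto (fun n => |(1 : ℝ) - c| * |z n| * |x n| ^ (c - 1)) atTop (nhds 0) := by
        have := (tza.const_mul (|(1 : ℝ) - c|)).mul (txa.pow (c - 1))
        simpa using this
      have t2 : Tendsto (fun n => |(1 : ℝ) - d| * |x n| ^ (d - 1)) atTop (nhds 0) := by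
        rcases eq_or_lt_of_le (show 1 ≤ d from hd) with hd1 | hd2
        · have : |(1 : ℝ) - d| = 0 := by rw [← hd1]; simp
          simpa [this] using tendsto_const_nhds (α := ℕ) (f := atTop) (a := (0 : ℝ))
        · have := (txa.pow (d - 1)).const_mul (|(1 : ℝ) - d|)
          simpa [zero_pow (show d - 1 ≠ 0 by omega)] using this
      simpa using t1.add t2
  · -- d ≤ c
    set G : ℕ → ℝ := fun n => gradNormR a 1 c d (x n) (y n) (z n) with hG
    set D : ℕ → ℝ := fun n => nrm2R (x n) (y n) * G n with hD
    set s : ℝ := Real.sqrt ((a : ℝ) * d) / 2 with hs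
    have hspos : 0 < s := by
      rw [hs]
      have : (0 : ℝ) < (a : ℝ) * d := by positivity
      positivity
    -- the package of eventual facts
    have hfacts : ∀ᶠ n in atTop,
        ((d : ℝ) / 2 * |x n| ^ (d - 1) ≤ |fxR 1 c d (x n) (z n)|) ∧
        (|x n| ^ d / 2 ≤ |y n| ^ a ∧ |y n| ^ a ≤ 2 * |x n| ^ d) ∧
        (s * |x n| ^ d ≤ D n) ∧ 0 < D n ∧ 0 < |y n| ∧ |x n| ≤ 1 := by
      filter_upwards [txa.eventually_le_const (show (0:ℝ) < 1 by norm_num),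
        tza.eventually_le_const (show (0:ℝ) < (d : ℝ) / (2 * c) by positivity),
        tza.eventually_le_const (show (0:ℝ) < 1/2 by norm_num)] with n hx1 hz2 hz3
      have hxpos : 0 < |x n| := abs_pos.2 (hx0 n)
      have F1 : (d : ℝ) / 2 * |x n| ^ (d - 1) ≤ |fxR 1 c d (x n) (z n)| :=
        fx_lower hc hd hdc hx1 hz2
      have hzx : |z n * x n ^ c| ≤ 1 / 2 * |x n| ^ d := by
        rw [abs_mul, abs_pow]
        exact mul_le_mul hz3 (pow_le_pow_of_le_one (abs_nonneg _) hx1 hdc)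
          (by positivity) (by norm_num)
      have hyeq : |y n| ^ a = |z n * x n ^ c + x n ^ d| := by
        rw [← abs_pow]
        congr 1
        have := (hX n).1
        rwa [pow_one] at this
      have F2l : |x n| ^ d / 2 ≤ |y n| ^ a := by
        rw [hyeq]
        have h5 := abs_sub_abs_le_abs_sub (x n ^ d) (-(z n * x n ^ c))
        rw [abs_neg, sub_neg_eq_add] at h5
        rw [add_comm]
        calc |x n| ^ d / 2 ≤ |x n ^ d| - |z n * x n ^ c| := by
              rw [abs_pow]; linarith
          _ ≤ |x n ^ d + z n * x n ^ c| := h5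
      have F2u : |y n| ^ a ≤ 2 * |x n| ^ d := by
        rw [hyeq]
        calc |z n * x n ^ c + x n ^ d| ≤ |z n * x n ^ c| + |x n ^ d| := abs_add_le _ _
          _ ≤ 1 / 2 * |x n| ^ d + |x n| ^ d := by rw [abs_pow]; linarith
          _ ≤ 2 * |x n| ^ d := by nlinarith [pow_nonneg (abs_nonneg (x n)) d]
      have hy0 : 0 < |y n| := by
        by_contra hcon
        push_neg at hcon
        have hy00 : |y n| = 0 := le_antisymm hcon (abs_nonneg _)
        rw [hy00, zero_pow ha.ne'] at F2l
        have : (0 : ℝ) < |x n| ^ d / 2 := by positivity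
        linarith
      have hfyeq : |fyR a (y n)| = (a : ℝ) * |y n| ^ (a - 1) := abs_fy_eq a (y n)
      have hGfx : |fxR 1 c d (x n) (z n)| ≤ G n := abs_fx_le_grad a 1 c d (x n) (y n) (z n)
      have hDpos : 0 < D n := by
        have h6 : 0 < (d : ℝ) / 2 * |x n| ^ (d - 1) := by positivity
        have h7 : 0 < G n := lt_of_lt_of_le h6 (F1.trans hGfx)
        have h8 : 0 < nrm2R (x n) (y n) := lt_of_lt_of_le hxpos (abs_le_nrm2R₁ _ _)
        exact mul_pos h8 h7
      have F3 : s * |x n| ^ d ≤ D n := by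
        have hsq : (s * |x n| ^ d) ^ 2 ≤ (D n) ^ 2 := by
          have e1 : (nrm2R (x n) (y n)) ^ 2 = x n ^ 2 + y n ^ 2 :=
            Real.sq_sqrt (by positivity)
          have e2 : (G n) ^ 2 = fxR 1 c d (x n) (z n) ^ 2 + fyR a (y n) ^ 2 +
              fzR 1 c (x n) (z n) ^ 2 := Real.sq_sqrt (by positivity)
          have t1 : 2 * |x n| * |y n| ≤ x n ^ 2 + y n ^ 2 := by
            have := two_mul_le_add_sq (|x n|) (|y n|)
            rwa [sq_abs, sq_abs] at this
          have t2 : 2 * |fxR 1 c d (x n) (z n)| * |fyR a (y n)| ≤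
              fxR 1 c d (x n) (z n) ^ 2 + fyR a (y n) ^ 2 + fzR 1 c (x n) (z n) ^ 2 := by
            have h9 := two_mul_le_add_sq (|fxR 1 c d (x n) (z n)|) (|fyR a (y n)|)
            rw [sq_abs, sq_abs] at h9
            nlinarith [sq_nonneg (fzR 1 c (x n) (z n))]
          have t3 : (a : ℝ) * d * (|x n| ^ d) ^ 2 ≤
              (2 * |x n| * |y n|) * (2 * |fxR 1 c d (x n) (z n)| * |fyR a (y n)|) := by
            calc (a : ℝ) * d * (|x n| ^ d) ^ 2
                = ((a : ℝ) * d) * (|x n| ^ d * |x n| ^ d) := by ring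
              _ ≤ ((a : ℝ) * d) * (|x n| ^ d * (2 * |y n| ^ a)) := by
                  refine mul_le_mul_of_nonneg_left
                    (mul_le_mul_of_nonneg_left (by linarith) (by positivity)) (by positivity)
              _ = 2 * ((a : ℝ) * d) * (|x n| ^ d * |y n| ^ a) := by ring
              _ = (2 * |x n| * |y n|) * (2 * ((d : ℝ) / 2 * |x n| ^ (d - 1)) *
                    ((a : ℝ) * |y n| ^ (a - 1))) := by
                  rw [← mul_pow_sub_one' hd.ne' (|x n|), ← mul_pow_sub_one' ha.ne' (|y n|)]
                  field_simp
              _ ≤ (2 * |x n| * |y n|) * (2 * |fxR 1 c d (x n) (z n)| * |fyR a (y n)|) := by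
                  rw [hfyeq]
                  gcongr
          calc (s * |x n| ^ d) ^ 2 = (a : ℝ) * d / 4 * (|x n| ^ d) ^ 2 := by
                rw [mul_pow, hs, div_pow, Real.sq_sqrt (by positivity)]
                ring
            _ ≤ (a : ℝ) * d * (|x n| ^ d) ^ 2 := by
                have hff : 0 ≤ (a : ℝ) * d * (|x n| ^ d) ^ 2 := by positivity
                linarith
            _ ≤ (2 * |x n| * |y n|) * (2 * |fxR 1 c d (x n) (z n)| * |fyR a (y n)|) := t3
            _ ≤ (x n ^ 2 + y n ^ 2) * (fxR 1 c d (x n) (z n) ^ 2 + fyR a (y n) ^ 2 +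
                  fzR 1 c (x n) (z n) ^ 2) :=
                mul_le_mul t1 t2 (by positivity) (by positivity)
            _ = (D n) ^ 2 := by rw [hD, mul_pow, e1, e2]
        exact le_of_pow_le_pow_left₀ two_ne_zero hDpos.le hsq
      exact ⟨F1, ⟨F2l, F2u⟩, F3, hDpos, hy0, hx1⟩
    show Tendsto (fun n => |x n * fxR 1 c d (x n) (z n) + y n * fyR a (y n)| / D n)
        atTop (nhds 0)
    set C1 : ℝ := 2 * |(a : ℝ) - c| / Real.sqrt ((a : ℝ) * d) with hC1
    have hAbound : ∀ᶠ n in atTop, |((a : ℝ) - c) * z n * x n ^ c| / D n ≤ C1 * |z n| := by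
      filter_upwards [hfacts] with n hf
      obtain ⟨F1, ⟨F2l, F2u⟩, F3, hDpos, hy0, hx1⟩ := hf
      have hxpos : 0 < |x n| := abs_pos.2 (hx0 n)
      have hApart : |((a : ℝ) - c) * z n * x n ^ c| ≤ |(a : ℝ) - c| * |z n| * |x n| ^ d := by
        rw [abs_mul, abs_mul, abs_pow]
        exact mul_le_mul_of_nonneg_left
          (pow_le_pow_of_le_one (abs_nonneg _) hx1 hdc) (by positivity)
      have hsd : 0 < s * |x n| ^ d := by positivity
      calc |((a : ℝ) - c) * z n * x n ^ c| / D n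
          ≤ (|(a : ℝ) - c| * |z n| * |x n| ^ d) / (s * |x n| ^ d) :=
            div_le_div₀ (by positivity) hApart hsd F3
        _ = C1 * |z n| := by
            rw [hC1, hs]
            have h1 : |x n| ^ d ≠ 0 := by positivity
            have h2 : Real.sqrt ((a : ℝ) * d) ≠ 0 := by positivity
            field_simp
    have hsplit : ∀ᶠ n in atTop,
        |x n * fxR 1 c d (x n) (z n) + y n * fyR a (y n)| / D n ≤
          |((a : ℝ) - c) * z n * x n ^ c| / D n + |((a : ℝ) - d) * x n ^ d| / D n := by
      filter_upwards [hfacts] with n hf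
      have hDpos : 0 < D n := hf.2.2.2.1
      rw [← add_div]
      exact (div_le_div_iff_of_pos_right hDpos).mpr (by rw [hnum n]; exact abs_add_le _ _)
    -- bound for the second term, by cases on a vs d
    obtain ⟨w, hw, hBbound⟩ : ∃ w : ℕ → ℝ, Tendsto w atTop (nhds 0) ∧
        ∀ᶠ n in atTop, |((a : ℝ) - d) * x n ^ d| / D n ≤ w n := by
      rcases lt_trichotomy a d with hlt | heq | hgt
      · -- a < d
        refine ⟨fun n => |(a : ℝ) - d| / a * (|x n| ^ (d - 1) / |y n| ^ (a - 1)), ?_, ?_⟩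
        · have hv : Tendsto (fun n => |x n| ^ (d - 1) / |y n| ^ (a - 1)) atTop (nhds 0) := by
            apply tendsto_zero_of_pow
              (fun n => div_nonneg (by positivity) (by positivity)) ha
            apply squeeze_zero' (Eventually.of_forall fun n => by positivity)
              (g := fun n => 2 ^ (a - 1) * |x n| ^ (d - a)) ?_ ?_
            · filter_upwards [hfacts] with n hf
              obtain ⟨F1, ⟨F2l, F2u⟩, F3, hDpos, hy0, hx1⟩ := hf
              have hxpos : 0 < |x n| := abs_pos.2 (hx0 n)
              have e1 : (|x n| ^ (d - 1) / |y n| ^ (a - 1)) ^ a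
                  = |x n| ^ ((d - 1) * a) / (|y n| ^ a) ^ (a - 1) := by
                rw [div_pow, ← pow_mul, pow_right_comm]
              rw [e1]
              have hstep : |x n| ^ ((d - 1) * a) / (|y n| ^ a) ^ (a - 1)
                  ≤ |x n| ^ ((d - 1) * a) / (|x n| ^ d / 2) ^ (a - 1) :=
                div_le_div_of_nonneg_left (by positivity) (by positivity)
                  (pow_le_pow_left₀ (by positivity) F2l _)
              refine hstep.trans (le_of_eq ?_)
              have hid : (d - 1) * a = d * (a - 1) + (d - a) := nat_exp_id ha hlt.le
              rw [hid, pow_add, div_pow, ← pow_mul]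
              have h1 : |x n| ^ (d * (a - 1)) ≠ 0 := by positivity
              have h2 : ((2 : ℝ)) ^ (a - 1) ≠ 0 := by positivity
              field_simp
            · have := (txa.pow (d - a)).const_mul ((2 : ℝ) ^ (a - 1))
              simpa [zero_pow (show d - a ≠ 0 by omega)] using this
          have := hv.const_mul (|(a : ℝ) - d| / a)
          simpa using this
        · filter_upwards [hfacts] with n hf
          obtain ⟨F1, ⟨F2l, F2u⟩, F3, hDpos, hy0, hx1⟩ := hf
          have hxpos : 0 < |x n| := abs_pos.2 (hx0 n)
          have hfyG : (a : ℝ) * |y n| ^ (a - 1) ≤ G n := by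
            rw [← abs_fy_eq]
            exact abs_fy_le_grad a 1 c d (x n) (y n) (z n)
          have hDge : |x n| * ((a : ℝ) * |y n| ^ (a - 1)) ≤ D n :=
            mul_le_mul (abs_le_nrm2R₁ _ _) hfyG (by positivity) (nrm2R_nonneg _ _)
          have hpos : 0 < |x n| * ((a : ℝ) * |y n| ^ (a - 1)) := by
            apply mul_pos hxpos
            apply mul_pos (by exact_mod_cast ha) (pow_pos hy0 _)
          calc |((a : ℝ) - d) * x n ^ d| / D n
              ≤ (|(a : ℝ) - d| * |x n| ^ d) / (|x n| * ((a : ℝ) * |y n| ^ (a - 1))) := by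
                apply div_le_div₀ (by positivity) (le_of_eq ?_) hpos hDge
                rw [abs_mul, abs_pow]
            _ = |(a : ℝ) - d| / a * (|x n| ^ (d - 1) / |y n| ^ (a - 1)) := by
                rw [← mul_pow_sub_one' hd.ne' (|x n|)]
                have h1 : |y n| ^ (a - 1) ≠ 0 := by positivity
                have h3 : (a : ℝ) ≠ 0 := Nat.cast_ne_zero.2 ha.ne'
                have h4 : |x n| ≠ 0 := hxpos.ne'
                field_simp
      · -- a = d
        refine ⟨fun _ => 0, tendsto_const_nhds, ?_⟩
        filter_upwards [] with n
        have : ((a : ℝ) - d) = 0 := by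
          rw [heq]; ring
        rw [this]
        simp
      · -- d < a
        refine ⟨fun n => 2 * |(a : ℝ) - d| / d * (|x n| / |y n|), ?_, ?_⟩
        · have hu : Tendsto (fun n => |x n| / |y n|) atTop (nhds 0) := by
            apply tendsto_zero_of_pow
              (fun n => div_nonneg (abs_nonneg _) (abs_nonneg _)) ha
            apply squeeze_zero' (Eventually.of_forall fun n => by positivity)
              (g := fun n => 2 * |x n| ^ (a - d)) ?_ ?_
            · filter_upwards [hfacts] with n hf
              obtain ⟨F1, ⟨F2l, F2u⟩, F3, hDpos, hy0, hx1⟩ := hf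
              have hxpos : 0 < |x n| := abs_pos.2 (hx0 n)
              have e1 : (|x n| / |y n|) ^ a = |x n| ^ a / |y n| ^ a := div_pow _ _ _
              rw [e1]
              have hstep : |x n| ^ a / |y n| ^ a ≤ |x n| ^ a / (|x n| ^ d / 2) :=
                div_le_div_of_nonneg_left (by positivity) (by positivity) F2l
              refine hstep.trans (le_of_eq ?_)
              have hpe : |x n| ^ a = |x n| ^ d * |x n| ^ (a - d) := by
                rw [← pow_add]; congr 1; omega
              rw [hpe]
              have h1 : |x n| ^ d ≠ 0 := by positivity
              field_simp
            · have := (txa.pow (a - d)).const_mul (2 : ℝ)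
              simpa [zero_pow (show a - d ≠ 0 by omega)] using this
          have := hu.const_mul (2 * |(a : ℝ) - d| / d)
          simpa using this
        · filter_upwards [hfacts] with n hf
          obtain ⟨F1, ⟨F2l, F2u⟩, F3, hDpos, hy0, hx1⟩ := hf
          have hxpos : 0 < |x n| := abs_pos.2 (hx0 n)
          have hfxG : (d : ℝ) / 2 * |x n| ^ (d - 1) ≤ G n :=
            F1.trans (abs_fx_le_grad a 1 c d (x n) (y n) (z n))
          have hDge : |y n| * ((d : ℝ) / 2 * |x n| ^ (d - 1)) ≤ D n :=
            mul_le_mul (abs_le_nrm2R₂ _ _) hfxG (by positivity) (nrm2R_nonneg _ _)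
          have hpos : 0 < |y n| * ((d : ℝ) / 2 * |x n| ^ (d - 1)) :=
            mul_pos hy0 (by positivity)
          calc |((a : ℝ) - d) * x n ^ d| / D n
              ≤ (|(a : ℝ) - d| * |x n| ^ d) / (|y n| * ((d : ℝ) / 2 * |x n| ^ (d - 1))) := by
                apply div_le_div₀ (by positivity) (le_of_eq ?_) hpos hDge
                rw [abs_mul, abs_pow]
            _ = 2 * |(a : ℝ) - d| / d * (|x n| / |y n|) := by
                rw [← mul_pow_sub_one' hd.ne' (|x n|)]
                have h1 : |y n| ≠ 0 := hy0.ne'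
                have h2 : |x n| ^ (d - 1) ≠ 0 := by positivity
                have h3 : (d : ℝ) ≠ 0 := Nat.cast_ne_zero.2 hd.ne'
                field_simp
    -- final squeeze
    apply squeeze_zero' (g := fun n => C1 * |z n| + w n)
    · exact Eventually.of_forall fun n => div_nonneg (abs_nonneg _)
        (mul_nonneg (nrm2R_nonneg _ _) (gradNormR_nonneg _ _ _ _ _ _ _))
    · filter_upwards [hsplit, hAbound, hBbound] with n h1 h2 h3
      calc |x n * fxR 1 c d (x n) (z n) + y n * fyR a (y n)| / D n
          ≤ |((a : ℝ) - c) * z n * x n ^ c| / D n + |((a : ℝ) - d) * x n ^ d| / D n := h1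
        _ ≤ C1 * |z n| + w n := add_le_add h2 h3
    · have := (tza.const_mul C1).add hw
      simpa using this


/-- For b = 1, Whitney (a)- and (b)-regularity coincide for y^a = z x^c + x^d in ℝ³,
both being equivalent to (a = 1 or d ≤ c). -/
theorem whitney_a_iff_b_real_b_eq_one (a c d : ℕ) (ha : 0 < a) (hc : 0 < c) (hd : 0 < d) :
    (aRegR a 1 c d ↔ bRegR a 1 c d) ∧
      (aRegR a 1 c d ↔ (a = 1 ∨ d ≤ c)) ∧
      (bRegR a 1 c d ↔ (a = 1 ∨ d ≤ c)) := by
  refine ⟨?_, ⟨fun hA => necA ha hc hd hA, fun h => suffA ha hc hd h⟩,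
    ⟨fun hB => necA ha hc hd hB.1, fun h => ⟨suffA ha hc hd h, suffB ha hc hd h⟩⟩⟩
  constructor
  · intro hA
    exact ⟨hA, suffB ha hc hd (necA ha hc hd hA)⟩
  · intro hB
    exact hB.1
end
end

section
/- Let a, b, c, d be positive integers with a > 1, a odd, and d > c. Let g : ℝ² → ℝ be the function g(x,t) = (t^b·x^c + x^d)^{1/a}, i.e. g(x,t) is the unique real number y with y^a = t^b·x^c + x^d. Then g is continuously differentiable (C¹) on ℝ² if and only if a ≤ c, (a ≤ b or d·(a − b) < a·c), b is even, and d − c is even. -/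
set_option maxHeartbeats 2000000

open Filter Real Set Topology Asymptotics

theorem rho_exists (a c : ℕ) (ha1 : 1 < a) (haodd : Odd a) (hac : a ≤ c) :
    ∃ ρ ρ' : ℝ → ℝ, (∀ x, HasDerivAt ρ (ρ' x) x) ∧ Continuous ρ' ∧
      (∀ x, ρ x ^ a = x ^ c) ∧ (∀ x, |ρ x| = |x| ^ ((c:ℝ)/a)) ∧
      (∀ x, |ρ' x| ≤ ((c:ℝ)/a) * |x| ^ ((c:ℝ)/a - 1)) := by
  have ha' : (0:ℝ) < a := by exact_mod_cast Nat.zero_lt_of_lt ha1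
  rcases eq_or_lt_of_le hac with hceq | hclt
  · -- c = a : ρ = id
    subst hceq
    refine ⟨id, fun _ => 1, fun x => hasDerivAt_id x, continuous_const, fun x => rfl, ?_, ?_⟩
    · intro x
      rw [div_self ha'.ne', Real.rpow_one, id]
    · intro x
      rw [div_self ha'.ne', sub_self, Real.rpow_zero, mul_one, abs_one]
  · -- a < c
    set γ : ℝ := (c:ℝ)/a with hγ
    have hγ1 : 1 < γ := by
      rw [hγ, lt_div_iff₀ ha', one_mul]
      exact_mod_cast hclt
    have hγ0 : 0 < γ := lt_trans zero_lt_one hγ1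
    set ρ : ℝ → ℝ := fun x => Real.sign x ^ c * |x| ^ γ with hρ
    set ρ' : ℝ → ℝ := fun x => γ * (Real.sign x ^ (c+1) * |x| ^ (γ - 1)) with hρ'
    have hρpos : ∀ x : ℝ, 0 < x → ρ x = x ^ γ := by
      intro x hx
      rw [hρ]
      simp only [Real.sign_of_pos hx, one_pow, one_mul, abs_of_pos hx]
    have hρneg : ∀ x : ℝ, x < 0 → ρ x = (-1:ℝ) ^ c * (-x) ^ γ := by
      intro x hx
      rw [hρ]
      simp only [Real.sign_of_neg hx, abs_of_neg hx]
    have hρ0 : ρ 0 = 0 := by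
      rw [hρ]
      simp only [Real.sign_zero, abs_zero]
      rw [zero_pow (by omega : c ≠ 0), zero_mul]
    have hρ'pos : ∀ x : ℝ, 0 < x → ρ' x = γ * x ^ (γ - 1) := by
      intro x hx
      rw [hρ']
      simp only [Real.sign_of_pos hx, one_pow, one_mul, abs_of_pos hx]
    have hρ'neg : ∀ x : ℝ, x < 0 → ρ' x = γ * ((-1:ℝ) ^ (c+1) * (-x) ^ (γ - 1)) := by
      intro x hx
      rw [hρ']
      simp only [Real.sign_of_neg hx, abs_of_neg hx]
    have hρ'0 : ρ' 0 = 0 := by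
      rw [hρ']
      simp only [Real.sign_zero, abs_zero]
      rw [zero_pow (by omega : c + 1 ≠ 0), zero_mul, mul_zero]
    have habs : ∀ x, |ρ x| = |x| ^ γ := by
      intro x
      rcases lt_trichotomy x 0 with hx | hx | hx
      · rw [hρneg x hx, abs_mul, abs_pow, abs_neg, abs_one, one_pow, one_mul,
          abs_of_nonneg (Real.rpow_nonneg (by linarith) γ), abs_of_neg hx]
      · subst hx; rw [hρ0, abs_zero, Real.zero_rpow hγ0.ne']
      · rw [hρpos x hx, abs_of_nonneg (Real.rpow_nonneg hx.le γ), abs_of_pos hx]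
    have habs' : ∀ x, |ρ' x| ≤ γ * |x| ^ (γ - 1) := by
      intro x
      rcases lt_trichotomy x 0 with hx | hx | hx
      · rw [hρ'neg x hx, abs_mul, abs_mul, abs_pow, abs_neg, abs_one, one_pow, one_mul,
          abs_of_pos hγ0, abs_of_nonneg (Real.rpow_nonneg (by linarith) _), abs_of_neg hx]
      · subst hx
        rw [hρ'0, abs_zero, Real.zero_rpow (by linarith : γ - 1 ≠ 0), mul_zero]
      · rw [hρ'pos x hx, abs_mul, abs_of_pos hγ0,
          abs_of_nonneg (Real.rpow_nonneg hx.le _), abs_of_pos hx]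
    have hpow : ∀ x, ρ x ^ a = x ^ c := by
      intro x
      rcases lt_trichotomy x 0 with hx | hx | hx
      · rw [hρneg x hx, mul_pow, ← pow_mul, ← Real.rpow_natCast ((-x) ^ γ) a,
          ← Real.rpow_mul (by linarith : (0:ℝ) ≤ -x)]
        rw [hγ, div_mul_cancel₀ _ ha'.ne']
        rw [Real.rpow_natCast]
        have h1 : (-1:ℝ) ^ (c * a) * (-x) ^ c = (-1:ℝ) ^ (c * a) * ((-1)^c * x ^ c) := by
          rw [neg_pow]; ring
        rw [h1, ← mul_assoc, ← pow_add]
        have : Even (c * a + c) := by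
          have : c * a + c = c * (a + 1) := by ring
          rw [this]
          exact (Nat.even_add_one.mpr (Nat.not_even_iff_odd.mpr haodd)).mul_left c
        rw [this.neg_one_pow, one_mul]
      · subst hx
        rw [hρ0, zero_pow (by omega : a ≠ 0), zero_pow (by omega : c ≠ 0)]
      · rw [hρpos x hx, ← Real.rpow_natCast (x ^ γ) a, ← Real.rpow_mul hx.le,
          hγ, div_mul_cancel₀ _ ha'.ne', Real.rpow_natCast]
    have hcontρ' : Continuous ρ' := by
      rw [continuous_iff_continuousAt]
      intro x₀
      rcases lt_trichotomy x₀ 0 with hx | hx | hx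
      · have hev : ρ' =ᶠ[𝓝 x₀] fun x => γ * ((-1:ℝ) ^ (c+1) * (-x) ^ (γ - 1)) := by
          filter_upwards [Iio_mem_nhds hx] with x (hx' : x < 0)
          exact hρ'neg x hx'
        apply ContinuousAt.congr _ hev.symm
        have : ContinuousAt (fun x : ℝ => (-x) ^ (γ - 1)) x₀ :=
          ContinuousAt.rpow_const (f := fun x : ℝ => -x) continuous_neg.continuousAt
            (Or.inl (by simp; linarith))
        exact (continuousAt_const.mul (continuousAt_const.mul this))
      · -- at 0 : squeeze
        subst hx
        have hb : Tendsto (fun x : ℝ => γ * |x| ^ (γ - 1)) (𝓝 0) (𝓝 0) := by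
          have h1 : ContinuousAt (fun x : ℝ => |x| ^ (γ - 1)) 0 :=
            ((Real.continuous_rpow_const (by linarith)).comp continuous_abs).continuousAt
          have h2 : ContinuousAt (fun x : ℝ => γ * |x| ^ (γ - 1)) 0 :=
            continuousAt_const.mul h1
          have h3 := h2.tendsto
          simpa [Real.zero_rpow (by linarith : γ - 1 ≠ 0)] using h3
        have hsq := squeeze_zero_norm (f := ρ') (fun x => by
          simpa [Real.norm_eq_abs] using habs' x) hb
        show Tendsto ρ' (𝓝 0) (𝓝 (ρ' 0))
        rwa [hρ'0]
      · have hev : ρ' =ᶠ[𝓝 x₀] fun x => γ * x ^ (γ - 1) := by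
          filter_upwards [Ioi_mem_nhds hx] with x (hx' : 0 < x)
          exact hρ'pos x hx'
        apply ContinuousAt.congr _ hev.symm
        exact continuousAt_const.mul
          (Real.continuousAt_rpow_const x₀ (γ-1) (Or.inl (by linarith)))
    have hderiv : ∀ x, HasDerivAt ρ (ρ' x) x := by
      intro x₀
      rcases lt_trichotomy x₀ 0 with hx | hx | hx
      · have hev : (fun x => (-1:ℝ) ^ c * (-x) ^ γ) =ᶠ[𝓝 x₀] ρ := by
          filter_upwards [Iio_mem_nhds hx] with x (hx' : x < 0)
          exact (hρneg x hx').symm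
        have h1 : HasDerivAt (fun x : ℝ => (-x) ^ γ) (γ * (-x₀) ^ (γ-1) * (-1)) x₀ := by
          have h2 : HasDerivAt (fun u : ℝ => u ^ γ) (γ * (-x₀) ^ (γ-1)) (-x₀) :=
            Real.hasDerivAt_rpow_const (p := γ) (Or.inl (by linarith))
          exact h2.comp x₀ (hasDerivAt_neg x₀)
        have h3 := h1.const_mul ((-1:ℝ) ^ c)
        have h4 : (-1:ℝ)^c * (γ * (-x₀) ^ (γ-1) * (-1)) = ρ' x₀ := by
          rw [hρ'neg x₀ hx, pow_succ]
          ring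
        rw [h4] at h3
        exact h3.congr_of_eventuallyEq hev.symm
      · subst hx
        rw [hρ'0]
        rw [hasDerivAt_iff_tendsto_slope]
        have hb : Tendsto (fun x : ℝ => |x| ^ (γ - 1)) (𝓝[≠] 0) (𝓝 0) := by
          have h1 : ContinuousAt (fun x : ℝ => |x| ^ (γ - 1)) 0 :=
            ((Real.continuous_rpow_const (by linarith)).comp continuous_abs).continuousAt
          have h2 : Tendsto (fun x : ℝ => |x| ^ (γ - 1)) (𝓝[≠] 0) (𝓝 (|(0:ℝ)| ^ (γ - 1))) :=
            h1.tendsto.mono_left nhdsWithin_le_nhds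
          simpa [Real.zero_rpow (by linarith : γ - 1 ≠ 0)] using h2
        apply squeeze_zero_norm _ hb
        intro x
        rcases eq_or_ne x 0 with rfl | hxne
        · simp [slope_def_field, hρ0, Real.norm_eq_abs]
          positivity
        · rw [slope_def_field, hρ0, sub_zero, sub_zero, Real.norm_eq_abs, abs_div,
            habs x]
          rw [div_le_iff₀ (abs_pos.mpr hxne), ← Real.rpow_add_one (abs_ne_zero.mpr hxne),
            sub_add_cancel]
      · have hev : (fun x : ℝ => x ^ γ) =ᶠ[𝓝 x₀] ρ := by
          filter_upwards [Ioi_mem_nhds hx] with x (hx' : 0 < x)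
          exact (hρpos x hx').symm
        have h1 : HasDerivAt (fun x : ℝ => x ^ γ) (γ * x₀ ^ (γ-1)) x₀ :=
          Real.hasDerivAt_rpow_const (p := γ) (Or.inl (by linarith))
        rw [← hρ'pos x₀ hx] at h1
        exact h1.congr_of_eventuallyEq hev.symm
    exact ⟨ρ, ρ', hderiv, hcontρ', hpow, habs, habs'⟩


theorem suffice (a b c d : ℕ) (hb : 0 < b) (hc : 0 < c) (hd : 0 < d) (ha1 : 1 < a)
    (haodd : Odd a) (hdc : c < d) (g : ℝ × ℝ → ℝ)
    (hg : ∀ x t : ℝ, g (x, t) ^ a = t ^ b * x ^ c + x ^ d)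
    (hac : a ≤ c) (hcond : a ≤ b ∨ d * (a - b) < a * c) (hbe : Even b)
    (hnev : Even (d - c)) : ContDiff ℝ 1 g := by
  obtain ⟨ρ, ρ', hρd, hρ'c, hρpow, hρabs, hρ'abs⟩ := rho_exists a c ha1 haodd hac
  have hρcont : Continuous ρ := continuous_iff_continuousAt.mpr fun x => (hρd x).continuousAt
  have ha' : (0:ℝ) < a := by exact_mod_cast Nat.zero_lt_of_lt ha1
  have hb' : (0:ℝ) < b := by exact_mod_cast hb
  set n : ℕ := d - c with hn
  have hn0 : 0 < n := by omega
  have hnc : n + c = d := by omega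
  have hn2 : 2 ≤ n := by
    rcases hnev with ⟨k, hk⟩; omega
  set α : ℝ := 1 / a with hα
  have hα0 : 0 < α := by positivity
  have hα1 : α < 1 := by rw [hα, div_lt_one ha']; exact_mod_cast ha1
  set γ : ℝ := (c:ℝ)/a with hγ
  have hγ1 : 1 ≤ γ := by rw [hγ, le_div_iff₀ ha', one_mul]; exact_mod_cast hac
  have hγ0 : 0 < γ := lt_of_lt_of_le zero_lt_one hγ1
  set w : ℝ × ℝ → ℝ := fun p => p.2 ^ b + p.1 ^ n with hw
  have hwnn : ∀ p, 0 ≤ w p := fun p => add_nonneg (hbe.pow_nonneg _) (hnev.pow_nonneg _)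
  have hwcont : Continuous w := (continuous_snd.pow b).add (continuous_fst.pow n)
  have hwpos : ∀ p : ℝ × ℝ, p ≠ 0 → 0 < w p := by
    intro p hp
    rcases (hwnn p).lt_or_eq with h | h
    · exact h
    exfalso
    apply hp
    have h1 : p.2 ^ b = 0 ∧ p.1 ^ n = 0 :=
      (add_eq_zero_iff_of_nonneg (hbe.pow_nonneg _) (hnev.pow_nonneg _)).mp h.symm
    have h2 : p.2 = 0 := pow_eq_zero_iff hb.ne' |>.mp h1.1
    have h3 : p.1 = 0 := pow_eq_zero_iff hn0.ne' |>.mp h1.2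
    exact Prod.ext h3 h2
  have hwx : ∀ p : ℝ × ℝ, p.1 ^ n ≤ w p := fun p => le_add_of_nonneg_left (hbe.pow_nonneg _)
  have hwt : ∀ p : ℝ × ℝ, p.2 ^ b ≤ w p := fun p => le_add_of_nonneg_right (hnev.pow_nonneg _)
  have hhcont : Continuous (fun p => w p ^ α) :=
    hwcont.rpow_const (fun p => Or.inr hα0.le)
  have hαa : α * a = 1 := by rw [hα]; field_simp
  -- g = G
  have hgG : ∀ p : ℝ × ℝ, g p = ρ p.1 * w p ^ α := by
    intro p
    apply (Odd.strictMono_pow (R := ℝ) haodd).injective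
    show g p ^ a = (ρ p.1 * w p ^ α) ^ a
    have h1 : (w p ^ α) ^ a = w p := by
      rw [← Real.rpow_natCast (w p ^ α) a, ← Real.rpow_mul (hwnn p), hαa, Real.rpow_one]
    rw [mul_pow, hρpow, h1, hg p.1 p.2]
    rw [hw]
    have h2 : p.1 ^ n * p.1 ^ c = p.1 ^ d := by rw [← pow_add, hnc]
    ring_nf
    nlinarith [h2]
  set fstL := ContinuousLinearMap.fst ℝ ℝ ℝ with hfstL
  set sndL := ContinuousLinearMap.snd ℝ ℝ ℝ with hsndL
  set A1 : ℝ × ℝ → ℝ := fun p => ρ' p.1 * w p ^ α with hA1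
  set A2 : ℝ × ℝ → ℝ := fun p =>
    ρ p.1 * (α * ((n:ℝ) * p.1 ^ (n-1)) * w p ^ (α - 1)) with hA2
  set A : ℝ × ℝ → ℝ := fun p => A1 p + A2 p with hA
  set B : ℝ × ℝ → ℝ := fun p =>
    ρ p.1 * (α * ((b:ℝ) * p.2 ^ (b-1)) * w p ^ (α - 1)) with hB
  set Dmap : ℝ × ℝ → (ℝ × ℝ →L[ℝ] ℝ) := fun p => A p • fstL + B p • sndL with hD
  have hw0 : w 0 = 0 := by
    rw [hw]
    show (0:ℝ) ^ b + (0:ℝ) ^ n = 0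
    rw [zero_pow hb.ne', zero_pow hn0.ne', add_zero]
  have hρ0 : ρ 0 = 0 := by
    have := hρabs 0
    rw [abs_zero, Real.zero_rpow hγ0.ne'] at this
    exact abs_eq_zero.mp this
  have hA20 : A2 0 = 0 := by
    rw [hA2]
    show ρ 0 * (α * ((n:ℝ) * (0:ℝ) ^ (n-1)) * w 0 ^ (α - 1)) = 0
    rw [hρ0]; ring
  have hA0 : A 0 = 0 := by
    rw [hA]
    show A1 0 + A2 0 = 0
    rw [hA20, hA1]
    show ρ' 0 * w 0 ^ α + 0 = 0
    rw [hw0, Real.zero_rpow hα0.ne']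
    ring
  have hB0 : B 0 = 0 := by
    rw [hB]
    show ρ 0 * (α * ((b:ℝ) * (0:ℝ) ^ (b-1)) * w 0 ^ (α - 1)) = 0
    rw [hρ0]; ring
  -- derivative at every point
  have HD : ∀ p, HasFDerivAt g (Dmap p) p := by
    intro p
    by_cases hp : p = 0
    · -- at the origin
      subst hp
      have hg0 : g 0 = 0 := by rw [hgG, Prod.fst_zero, hρ0, zero_mul]
      have hDmap0 : Dmap 0 = 0 := by rw [hD]; show A 0 • fstL + B 0 • sndL = 0; rw [hA0, hB0]; simp
      rw [hDmap0]
      rw [hasFDerivAt_iff_isLittleO_nhds_zero]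
      simp only [zero_add, hg0, ContinuousLinearMap.zero_apply, sub_zero]
      rw [isLittleO_iff]
      intro ε hε
      -- the controlling function
      set v : ℝ × ℝ → ℝ := fun p => |p.1| ^ (γ - 1) * w p ^ α with hv
      have hvcont : Continuous v :=
        ((Real.continuous_rpow_const (by linarith)).comp (continuous_abs.comp continuous_fst)).mul
          hhcont
      have hv0 : v 0 = 0 := by
        rw [hv]
        show |(0:ℝ×ℝ).1| ^ (γ - 1) * w 0 ^ α = 0
        rw [hw0, Real.zero_rpow hα0.ne', mul_zero]
      have hvt : Tendsto v (𝓝 0) (𝓝 0) := by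
        have := hvcont.tendsto 0
        rwa [hv0] at this
      have hvev : ∀ᶠ p : ℝ × ℝ in 𝓝 0, v p < ε := hvt.eventually_lt_const hε
      have hvnn : ∀ p : ℝ × ℝ, 0 ≤ v p :=
        fun p => mul_nonneg (Real.rpow_nonneg (abs_nonneg _) _) (Real.rpow_nonneg (hwnn p) _)
      filter_upwards [hvev] with p hvp
      have hbound : ‖g p‖ ≤ v p * ‖p‖ := by
        rw [hgG, Real.norm_eq_abs, abs_mul, hρabs,
          abs_of_nonneg (Real.rpow_nonneg (hwnn p) α)]
        rcases eq_or_ne p.1 0 with h1 | h1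
        · rw [h1, abs_zero, Real.zero_rpow hγ0.ne', zero_mul]
          exact mul_nonneg (hvnn p) (norm_nonneg p)
        · have hX : (0:ℝ) < |p.1| := abs_pos.mpr h1
          have h2 : |p.1| ^ γ = |p.1| ^ (γ - 1) * |p.1| := by
            rw [← Real.rpow_add_one hX.ne' (γ - 1), sub_add_cancel]
          rw [h2]
          calc |p.1| ^ (γ - 1) * |p.1| * w p ^ α
              = v p * |p.1| := by rw [hv]; ring
            _ ≤ v p * ‖p‖ := by
                apply mul_le_mul_of_nonneg_left _ (hvnn p)
                exact (Real.norm_eq_abs p.1) ▸ norm_fst_le p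
      calc ‖g p‖ ≤ v p * ‖p‖ := hbound
        _ ≤ ε * ‖p‖ := mul_le_mul_of_nonneg_right hvp.le (norm_nonneg p)
    · -- away from the origin
      have hwp : 0 < w p := hwpos p hp
      have Hw : HasFDerivAt w
          (((b:ℝ) * p.2 ^ (b-1)) • sndL + ((n:ℝ) * p.1 ^ (n-1)) • fstL) p := by
        have H1 : HasFDerivAt (fun q : ℝ × ℝ => q.2 ^ b) (((b:ℝ) * p.2 ^ (b-1)) • sndL) p :=
          HasDerivAt.comp_hasFDerivAt _ (hasDerivAt_pow b p.2) hasFDerivAt_snd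
        have H2 : HasFDerivAt (fun q : ℝ × ℝ => q.1 ^ n) (((n:ℝ) * p.1 ^ (n-1)) • fstL) p :=
          HasDerivAt.comp_hasFDerivAt _ (hasDerivAt_pow n p.1) hasFDerivAt_fst
        exact H1.add H2
      have Hh : HasFDerivAt (fun q => w q ^ α)
          ((α * w p ^ (α - 1)) • (((b:ℝ) * p.2 ^ (b-1)) • sndL + ((n:ℝ) * p.1 ^ (n-1)) • fstL))
          p :=
        HasDerivAt.comp_hasFDerivAt _ (Real.hasDerivAt_rpow_const (p := α) (Or.inl hwp.ne')) Hw
      have Hρ : HasFDerivAt (fun q : ℝ × ℝ => ρ q.1) (ρ' p.1 • fstL) p :=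
        HasDerivAt.comp_hasFDerivAt _ (hρd p.1) hasFDerivAt_fst
      have HG := Hρ.mul Hh
      have heqD : ρ p.1 • ((α * w p ^ (α - 1)) •
            (((b:ℝ) * p.2 ^ (b-1)) • sndL + ((n:ℝ) * p.1 ^ (n-1)) • fstL))
          + (w p ^ α) • (ρ' p.1 • fstL) = Dmap p := by
        apply ContinuousLinearMap.ext
        intro z
        rw [hD, hA, hA1, hA2, hB, hfstL, hsndL]
        simp only [ContinuousLinearMap.add_apply, ContinuousLinearMap.smul_apply,
          ContinuousLinearMap.coe_fst', ContinuousLinearMap.coe_snd', smul_eq_mul]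
        ring
      rw [heqD] at HG
      have hfun : (fun q : ℝ × ℝ => ρ q.1 * w q ^ α) = g := by
        funext q; rw [hgG q]
      rwa [show ((fun q : ℝ × ℝ => ρ q.1) * fun q => w q ^ α) = g from hfun] at HG
  -- continuity away from the origin of the singular factor
  have hwca : ∀ p : ℝ × ℝ, p ≠ 0 → ContinuousAt (fun q => w q ^ (α - 1)) p := by
    intro p hp
    exact hwcont.continuousAt.rpow_const (Or.inl (hwpos p hp).ne')
  -- continuity of A
  have he2 : (0:ℝ) < (d:ℝ)/a - 1 := by
    rw [sub_pos, lt_div_iff₀ ha', one_mul]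
    exact_mod_cast lt_of_le_of_lt hac hdc
  have hA2bound : ∀ p : ℝ × ℝ, ‖A2 p‖ ≤ α * n * |p.1| ^ ((d:ℝ)/a - 1) := by
    intro p
    rcases eq_or_ne p.1 0 with h1 | h1
    · rw [hA2]
      show ‖ρ p.1 * (α * ((n:ℝ) * p.1 ^ (n-1)) * w p ^ (α - 1))‖ ≤ _
      rw [h1, hρ0, zero_mul, norm_zero]
      have h2 : (0:ℝ) ≤ |(0:ℝ)| ^ ((d:ℝ)/a - 1) := Real.rpow_nonneg (abs_nonneg _) _
      have h3 : (0:ℝ) ≤ (n:ℝ) := by positivity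
      exact mul_nonneg (mul_nonneg hα0.le h3) h2
    · have hp : p ≠ 0 := fun h => h1 (by rw [h]; rfl)
      have hwp : 0 < w p := hwpos p hp
      have hX : (0:ℝ) < |p.1| := abs_pos.mpr h1
      set X := |p.1| with hXdef
      have hXn : X ^ n = p.1 ^ n := hnev.pow_abs p.1
      have hXnpos : (0:ℝ) < X ^ n := pow_pos hX n
      have hstep : w p ^ (α - 1) ≤ (X ^ n) ^ (α - 1) := by
        apply Real.rpow_le_rpow_of_nonpos hXnpos _ (by linarith)
        rw [hXn]; exact hwx p
      have habs2 : ‖A2 p‖ = X ^ γ * (α * ((n:ℝ) * X ^ (n-1)) * w p ^ (α - 1)) := by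
        rw [hA2]
        show ‖ρ p.1 * (α * ((n:ℝ) * p.1 ^ (n-1)) * w p ^ (α - 1))‖ = _
        rw [Real.norm_eq_abs, abs_mul, hρabs, abs_mul, abs_mul, abs_mul, abs_pow,
          abs_of_nonneg (Real.rpow_nonneg hwp.le _), abs_of_nonneg hα0.le,
          abs_of_nonneg (by positivity : (0:ℝ) ≤ (n:ℝ))]
      rw [habs2]
      have hmono : X ^ γ * (α * ((n:ℝ) * X ^ (n-1)) * w p ^ (α - 1)) ≤
          X ^ γ * (α * ((n:ℝ) * X ^ (n-1)) * (X ^ n) ^ (α - 1)) := by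
        apply mul_le_mul_of_nonneg_left _ (Real.rpow_nonneg hX.le γ)
        apply mul_le_mul_of_nonneg_left hstep
        positivity
      refine le_trans hmono (le_of_eq ?_)
      have hcastn : ((n - 1 : ℕ) : ℝ) = (n:ℝ) - 1 := by
        push_cast [Nat.cast_sub hn0]; ring
      have hd' : (d:ℝ) = (n:ℝ) + c := by exact_mod_cast congrArg (Nat.cast : ℕ → ℝ) hnc.symm
      have hexp : γ + (((n - 1:ℕ):ℝ) + (n:ℝ) * (α - 1)) = (d:ℝ)/a - 1 := by
        rw [hcastn, hγ, hα, hd']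
        field_simp
        ring
      have h1' : (X ^ n) ^ (α - 1) = X ^ ((n:ℝ) * (α - 1)) := by
        rw [← Real.rpow_natCast X n, ← Real.rpow_mul hX.le]
      have h2' : X ^ (n - 1) = X ^ (((n - 1:ℕ)):ℝ) := (Real.rpow_natCast X (n-1)).symm
      have key : X ^ γ * (X ^ (((n - 1:ℕ)):ℝ) * X ^ ((n:ℝ) * (α - 1))) = X ^ ((d:ℝ)/a - 1) := by
        rw [← Real.rpow_add hX, ← Real.rpow_add hX, hexp]
      rw [h1', h2', ← key]
      ring
  have hA2tend : Tendsto (fun p : ℝ × ℝ => α * n * |p.1| ^ ((d:ℝ)/a - 1)) (𝓝 0) (𝓝 0) := by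
    have hcontb : Continuous (fun p : ℝ × ℝ => α * n * |p.1| ^ ((d:ℝ)/a - 1)) :=
      continuous_const.mul
        ((Real.continuous_rpow_const he2.le).comp (continuous_abs.comp continuous_fst))
    have := hcontb.tendsto 0
    have hval : α * (n:ℝ) * |(0:ℝ×ℝ).1| ^ ((d:ℝ)/a - 1) = 0 := by
      rw [Prod.fst_zero, abs_zero, Real.zero_rpow he2.ne', mul_zero]
    rwa [hval] at this
  have hA2cont : Continuous A2 := by
    rw [continuous_iff_continuousAt]
    intro p
    by_cases hp : p = 0
    · subst hp
      have := squeeze_zero_norm hA2bound hA2tend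
      show Tendsto A2 (𝓝 0) (𝓝 (A2 0))
      rwa [hA20]
    · rw [hA2]
      exact ((hρcont.comp continuous_fst).continuousAt).mul
        ((continuousAt_const.mul
          (continuousAt_const.mul ((continuous_fst.pow (n-1)).continuousAt))).mul (hwca p hp))
  have hAcont : Continuous A := by
    rw [hA]
    exact (((hρ'c.comp continuous_fst).mul hhcont)).add hA2cont
  -- continuity of B
  have hBcont : Continuous B := by
    have hq : (0:ℝ) ≤ ((b - 1 : ℕ):ℝ) / b := by positivity
    set q : ℝ := ((b - 1 : ℕ):ℝ) / b with hqdef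
    set β : ℝ := α - 1/(b:ℝ) with hβ
    have hcastb : ((b - 1 : ℕ) : ℝ) = (b:ℝ) - 1 := by push_cast [Nat.cast_sub hb]; ring
    have hqβ : q + (α - 1) = β := by
      rw [hqdef, hβ, hcastb]
      field_simp
      ring
    have hBb : ∀ p : ℝ × ℝ, p.1 ≠ 0 → ‖B p‖ ≤ α * b * (|p.1| ^ γ * w p ^ β) := by
      intro p h1
      have hp : p ≠ 0 := fun h => h1 (by rw [h]; rfl)
      have hwp : 0 < w p := hwpos p hp
      have habsB : ‖B p‖ = |p.1| ^ γ * (α * ((b:ℝ) * |p.2| ^ (b-1)) * w p ^ (α - 1)) := by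
        rw [hB]
        show ‖ρ p.1 * (α * ((b:ℝ) * p.2 ^ (b-1)) * w p ^ (α - 1))‖ = _
        rw [Real.norm_eq_abs, abs_mul, hρabs, abs_mul, abs_mul, abs_mul, abs_pow,
          abs_of_nonneg (Real.rpow_nonneg hwp.le _), abs_of_nonneg hα0.le,
          abs_of_nonneg (by positivity : (0:ℝ) ≤ (b:ℝ))]
      have htb : |p.2| ^ (b-1) = (p.2 ^ b) ^ q := by
        rw [← hbe.pow_abs p.2, ← Real.rpow_natCast |p.2| b, ← Real.rpow_mul (abs_nonneg _),
          hqdef]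
        rw [← Real.rpow_natCast |p.2| (b-1)]
        congr 1
        field_simp
      have htb2 : (p.2 ^ b) ^ q ≤ w p ^ q :=
        Real.rpow_le_rpow (hbe.pow_nonneg _) (hwt p) hq
      have hcomb : w p ^ q * w p ^ (α - 1) = w p ^ β := by
        rw [← Real.rpow_add hwp, hqβ]
      rw [habsB, htb]
      calc |p.1| ^ γ * (α * ((b:ℝ) * (p.2 ^ b) ^ q) * w p ^ (α - 1))
          ≤ |p.1| ^ γ * (α * ((b:ℝ) * w p ^ q) * w p ^ (α - 1)) := by
            apply mul_le_mul_of_nonneg_left _ (Real.rpow_nonneg (abs_nonneg _) γ)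
            have h3 : (0:ℝ) ≤ w p ^ (α - 1) := Real.rpow_nonneg hwp.le _
            apply mul_le_mul_of_nonneg_right _ h3
            apply mul_le_mul_of_nonneg_left _ hα0.le
            exact mul_le_mul_of_nonneg_left htb2 hb'.le
        _ = α * b * (|p.1| ^ γ * w p ^ β) := by rw [← hcomb]; ring
    have hB0' : ∀ p : ℝ × ℝ, p.1 = 0 → B p = 0 := by
      intro p h1
      rw [hB]
      show ρ p.1 * (α * ((b:ℝ) * p.2 ^ (b-1)) * w p ^ (α - 1)) = 0
      rw [h1, hρ0, zero_mul]
    have hBcontAt0 : ContinuousAt B 0 := by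
      rcases le_or_gt a b with hab | hba
      · -- a ≤ b : exponent β is nonnegative
        have hβ0 : 0 ≤ β := by
          rw [hβ, hα, sub_nonneg, div_le_div_iff₀ hb' ha', one_mul, one_mul]
          exact_mod_cast hab
        have hbound : ∀ p : ℝ × ℝ, ‖B p‖ ≤ α * b * (|p.1| ^ γ * w p ^ β) := by
          intro p
          rcases eq_or_ne p.1 0 with h1 | h1
          · rw [hB0' p h1, norm_zero]
            have : (0:ℝ) ≤ |p.1| ^ γ * w p ^ β :=
              mul_nonneg (Real.rpow_nonneg (abs_nonneg _) _) (Real.rpow_nonneg (hwnn p) _)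
            positivity
          · exact hBb p h1
        have hcontb : Continuous (fun p : ℝ × ℝ => α * b * (|p.1| ^ γ * w p ^ β)) :=
          continuous_const.mul
            (((Real.continuous_rpow_const hγ0.le).comp (continuous_abs.comp continuous_fst)).mul
              (hwcont.rpow_const (fun p => Or.inr hβ0)))
        have htend : Tendsto (fun p : ℝ × ℝ => α * b * (|p.1| ^ γ * w p ^ β)) (𝓝 0) (𝓝 0) := by
          have := hcontb.tendsto 0
          have hval : α * (b:ℝ) * (|(0:ℝ×ℝ).1| ^ γ * w 0 ^ β) = 0 := by
            rw [Prod.fst_zero, abs_zero, Real.zero_rpow hγ0.ne', zero_mul, mul_zero]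
          rwa [hval] at this
        have := squeeze_zero_norm hbound htend
        show Tendsto B (𝓝 0) (𝓝 (B 0))
        rwa [hB0]
      · -- b < a and d * (a - b) < a * c
        have hstrict : d * (a - b) < a * c := hcond.resolve_left (by omega)
        have hβneg : β ≤ 0 := by
          rw [hβ, hα, sub_nonpos, div_le_div_iff₀ ha' hb', one_mul, one_mul]
          exact_mod_cast hba.le
        set E : ℝ := (d:ℝ)/a - (n:ℝ)/b with hE
        have hEpos : 0 < E := by
          rw [hE, sub_pos, div_lt_div_iff₀ hb' ha']
          have hcast : ((d * (a - b) : ℕ) : ℝ) < ((a * c : ℕ) : ℝ) := by exact_mod_cast hstrict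
          push_cast [Nat.cast_sub hba.le] at hcast
          have hncast : (n:ℝ) = (d:ℝ) - c := by push_cast [hn, Nat.cast_sub hdc.le]; ring
          rw [hncast]
          nlinarith [hcast]
        have hbound : ∀ p : ℝ × ℝ, ‖B p‖ ≤ α * b * |p.1| ^ E := by
          intro p
          rcases eq_or_ne p.1 0 with h1 | h1
          · rw [hB0' p h1, norm_zero]
            positivity
          · have hp : p ≠ 0 := fun h => h1 (by rw [h]; rfl)
            have hwp : 0 < w p := hwpos p hp
            have hX : (0:ℝ) < |p.1| := abs_pos.mpr h1
            have hXn : |p.1| ^ n = p.1 ^ n := hnev.pow_abs p.1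
            have hXnpos : (0:ℝ) < |p.1| ^ n := pow_pos hX n
            have hstep : w p ^ β ≤ (|p.1| ^ n) ^ β := by
              apply Real.rpow_le_rpow_of_nonpos hXnpos _ hβneg
              rw [hXn]; exact hwx p
            have hEeq : |p.1| ^ γ * (|p.1| ^ n) ^ β = |p.1| ^ E := by
              rw [← Real.rpow_natCast |p.1| n, ← Real.rpow_mul hX.le, ← Real.rpow_add hX]
              congr 1
              rw [hγ, hβ, hα, hE]
              have hd2 : (d:ℝ) = (n:ℝ) + c := by
                exact_mod_cast congrArg (Nat.cast : ℕ → ℝ) hnc.symm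
              rw [hd2]
              field_simp
              ring
            calc ‖B p‖ ≤ α * b * (|p.1| ^ γ * w p ^ β) := hBb p h1
              _ ≤ α * b * (|p.1| ^ γ * (|p.1| ^ n) ^ β) := by
                  apply mul_le_mul_of_nonneg_left _ (by positivity)
                  exact mul_le_mul_of_nonneg_left hstep (Real.rpow_nonneg (abs_nonneg _) _)
              _ = α * b * |p.1| ^ E := by rw [hEeq]
        have htend : Tendsto (fun p : ℝ × ℝ => α * b * |p.1| ^ E) (𝓝 0) (𝓝 0) := by
          have hcontb : Continuous (fun p : ℝ × ℝ => α * b * |p.1| ^ E) :=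
            continuous_const.mul
              ((Real.continuous_rpow_const hEpos.le).comp (continuous_abs.comp continuous_fst))
          have := hcontb.tendsto 0
          have hval : α * (b:ℝ) * |(0:ℝ×ℝ).1| ^ E = 0 := by
            rw [Prod.fst_zero, abs_zero, Real.zero_rpow hEpos.ne', mul_zero]
          rwa [hval] at this
        have := squeeze_zero_norm hbound htend
        show Tendsto B (𝓝 0) (𝓝 (B 0))
        rwa [hB0]
    rw [continuous_iff_continuousAt]
    intro p
    by_cases hp : p = 0
    · subst hp; exact hBcontAt0
    · rw [hB]
      exact ((hρcont.comp continuous_fst).continuousAt).mul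
        ((continuousAt_const.mul
          (continuousAt_const.mul ((continuous_snd.pow (b-1)).continuousAt))).mul (hwca p hp))
  -- conclusion
  refine contDiff_one_iff_fderiv.mpr ⟨fun p => (HD p).differentiableAt, ?_⟩
  have hfd : fderiv ℝ g = Dmap := funext fun p => (HD p).fderiv
  rw [hfd, hD]
  exact (hAcont.smul continuous_const).add (hBcont.smul continuous_const)


theorem nec_even_b (a b c d : ℕ) (hb : 0 < b) (ha1 : 1 < a) (haodd : Odd a) (hc : 0 < c) (hd : 0 < d)
    (g : ℝ × ℝ → ℝ) (hg : ∀ x t : ℝ, g (x, t) ^ a = t ^ b * x ^ c + x ^ d)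
    (hC : ContDiff ℝ 1 g) : Even b := by
  have hdiff : Differentiable ℝ g := hC.differentiable one_ne_zero
  by_contra hbe
  have hbo : Odd b := Nat.not_even_iff_odd.mp hbe
  set φ : ℝ → ℝ := fun t => g (1, t) with hφ
  have hφd : HasDerivAt φ (fderiv ℝ g (1, -1) (0, 1)) (-1) := by
    have h1 : HasDerivAt (fun t : ℝ => ((1:ℝ), t)) (0, 1) (-1) :=
      (hasDerivAt_const _ _).prodMk (hasDerivAt_id _)
    exact (hdiff (1, -1)).hasFDerivAt.comp_hasDerivAt _ h1
  have hφa : ∀ t, φ t ^ a = t ^ b + 1 := by intro t; simpa using hg 1 t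
  have hφ0 : φ (-1) = 0 := by
    have h := hφa (-1)
    rw [hbo.neg_one_pow] at h
    have h2 : φ (-1) ^ a = 0 := by linarith
    exact pow_eq_zero_iff (by omega : a ≠ 0) |>.mp h2
  have H1 : HasDerivAt (fun t => φ t ^ a)
      ((a : ℝ) * φ (-1) ^ (a - 1) * fderiv ℝ g (1, -1) (0, 1)) (-1) := hφd.pow a
  have H2 : HasDerivAt (fun t : ℝ => t ^ b + 1) ((b : ℝ) * (-1) ^ (b - 1)) (-1) :=
    (hasDerivAt_pow b (-1)).add_const 1
  have H1' : HasDerivAt (fun t : ℝ => t ^ b + 1)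
      ((a : ℝ) * φ (-1) ^ (a - 1) * fderiv ℝ g (1, -1) (0, 1)) (-1) := by
    have : (fun t => φ t ^ a) = fun t : ℝ => t ^ b + 1 := funext hφa
    rwa [this] at H1
  have := H1'.unique H2
  rw [hφ0, zero_pow (by omega : a - 1 ≠ 0)] at this
  have hb1 : Even (b - 1) := Nat.Odd.sub_odd hbo odd_one
  rw [hb1.neg_one_pow] at this
  have : (b:ℝ) = 0 := by simpa using this.symm
  exact_mod_cast absurd this (by positivity)


theorem nec_even_dc (a b c d : ℕ) (hb : 0 < b) (ha1 : 1 < a) (hc : 0 < c) (hd : 0 < d) (hdc : c < d)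
    (g : ℝ × ℝ → ℝ) (hg : ∀ x t : ℝ, g (x, t) ^ a = t ^ b * x ^ c + x ^ d)
    (hC : ContDiff ℝ 1 g) : Even (d - c) := by
  have hdiff : Differentiable ℝ g := hC.differentiable one_ne_zero
  by_contra hde
  have hdo : Odd (d - c) := Nat.not_even_iff_odd.mp hde
  set ψ : ℝ → ℝ := fun x => g (x, 1) with hψ
  have hψd : HasDerivAt ψ (fderiv ℝ g (-1, 1) (1, 0)) (-1) := by
    have h1 : HasDerivAt (fun x : ℝ => (x, (1:ℝ))) (1, 0) (-1) :=
      (hasDerivAt_id _).prodMk (hasDerivAt_const _ _)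
    exact HasFDerivAt.comp_hasDerivAt (f := fun x : ℝ => (x, (1:ℝ))) _
      (hdiff (-1, 1)).hasFDerivAt h1
  have hψa : ∀ x, ψ x ^ a = x ^ c + x ^ d := by intro x; simpa using hg x 1
  have hpow : (-1 : ℝ) ^ d = -(-1 : ℝ) ^ c := by
    have : d = c + (d - c) := by omega
    rw [this, pow_add, hdo.neg_one_pow]; ring
  have hψ0 : ψ (-1) = 0 := by
    have h := hψa (-1)
    rw [hpow] at h
    have h2 : ψ (-1) ^ a = 0 := by linarith
    exact pow_eq_zero_iff (by omega : a ≠ 0) |>.mp h2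
  have H1 : HasDerivAt (fun x => ψ x ^ a)
      ((a : ℝ) * ψ (-1) ^ (a - 1) * fderiv ℝ g (-1, 1) (1, 0)) (-1) := hψd.pow a
  have H2 : HasDerivAt (fun x : ℝ => x ^ c + x ^ d)
      ((c : ℝ) * (-1) ^ (c - 1) + (d : ℝ) * (-1) ^ (d - 1)) (-1) :=
    (hasDerivAt_pow c (-1)).add (hasDerivAt_pow d (-1))
  have H1' : HasDerivAt (fun x : ℝ => x ^ c + x ^ d)
      ((a : ℝ) * ψ (-1) ^ (a - 1) * fderiv ℝ g (-1, 1) (1, 0)) (-1) := by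
    have : (fun x => ψ x ^ a) = fun x : ℝ => x ^ c + x ^ d := funext hψa
    rwa [this] at H1
  have heq := H1'.unique H2
  rw [hψ0, zero_pow (by omega : a - 1 ≠ 0)] at heq
  have hpow2 : (-1 : ℝ) ^ (d - 1) = -(-1 : ℝ) ^ (c - 1) := by
    have : d - 1 = (c - 1) + (d - c) := by omega
    rw [this, pow_add, hdo.neg_one_pow]; ring
  rw [hpow2] at heq
  have hne : ((c : ℝ) - d) * (-1 : ℝ) ^ (c - 1) ≠ 0 := by
    apply mul_ne_zero
    · have : (c : ℝ) < d := by exact_mod_cast hdc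
      linarith
    · exact pow_ne_zero _ (by norm_num)
  apply hne
  have : (c : ℝ) * (-1) ^ (c - 1) + (d:ℝ) * -(-1:ℝ) ^ (c - 1) = 0 := by linarith [heq]
  linarith [this]



theorem nec_a_le_c (a b c d : ℕ) (hb : 0 < b) (ha1 : 1 < a) (hc : 0 < c) (hd : 0 < d) (hdc : c < d)
    (g : ℝ × ℝ → ℝ) (hg : ∀ x t : ℝ, g (x, t) ^ a = t ^ b * x ^ c + x ^ d)
    (hC : ContDiff ℝ 1 g) : a ≤ c := by
  have hdiff : Differentiable ℝ g := hC.differentiable one_ne_zero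
  by_contra hca'
  have hca : c < a := by omega
  set ψ : ℝ → ℝ := fun x => g (x, 1) with hψ
  have hψd : HasDerivAt ψ (fderiv ℝ g (0, 1) (1, 0)) 0 := by
    have h1 : HasDerivAt (fun x : ℝ => (x, (1:ℝ))) (1, 0) 0 :=
      (hasDerivAt_id _).prodMk (hasDerivAt_const _ _)
    exact HasFDerivAt.comp_hasDerivAt (f := fun x : ℝ => (x, (1:ℝ))) _
      (hdiff (0, 1)).hasFDerivAt h1
  have hψa : ∀ x, ψ x ^ a = x ^ c + x ^ d := by intro x; simpa using hg x 1
  have hψ0 : ψ 0 = 0 := by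
    have h := hψa 0
    rw [zero_pow hc.ne', zero_pow hd.ne', add_zero] at h
    exact pow_eq_zero_iff (by omega : a ≠ 0) |>.mp h
  set L := fderiv ℝ g (0, 1) (1, 0) with hL
  have T1 : Tendsto (fun x => ψ x / x) (𝓝[>] (0:ℝ)) (𝓝 L) := by
    have := hasDerivAt_iff_tendsto_slope.mp hψd
    have h2 : Tendsto (slope ψ 0) (𝓝[>] (0:ℝ)) (𝓝 L) :=
      this.mono_left (nhdsWithin_mono _ (fun x hx => ne_of_gt hx))
    refine h2.congr (fun x => ?_)
    simp [slope_def_field, hψ0]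
  have T2 : Tendsto (fun x => (x ^ c + x ^ d) / x ^ a) (𝓝[>] (0:ℝ)) (𝓝 (L ^ a)) := by
    have := T1.pow a
    refine this.congr' ?_
    filter_upwards [self_mem_nhdsWithin] with x hx
    rw [div_pow, hψa]
  have T3 : Tendsto (fun x : ℝ => (x ^ c + x ^ d) / x ^ a) (𝓝[>] (0:ℝ)) atTop := by
    have Tbase : Tendsto (fun x : ℝ => (x⁻¹) ^ (a - c)) (𝓝[>] (0:ℝ)) atTop :=
      (tendsto_pow_atTop (by omega : a - c ≠ 0)).comp tendsto_inv_nhdsGT_zero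
    apply tendsto_atTop_mono' _ ?_ Tbase
    filter_upwards [self_mem_nhdsWithin] with x (hx : 0 < x)
    have hxa : (0:ℝ) < x ^ a := pow_pos hx a
    have hsplit : x ^ a = x ^ c * x ^ (a - c) := by rw [← pow_add]; congr 1; omega
    have h1 : (x⁻¹) ^ (a - c) = x ^ c / x ^ a := by
      rw [hsplit, inv_pow]
      rw [div_mul_cancel_left₀ (by positivity : (x:ℝ) ^ c ≠ 0), inv_eq_one_div]
    show (x⁻¹) ^ (a - c) ≤ (x ^ c + x ^ d) / x ^ a
    rw [h1]
    exact (div_le_div_iff_of_pos_right hxa).mpr (le_add_of_nonneg_right (by positivity))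
  exact not_tendsto_nhds_of_tendsto_atTop T3 _ T2


theorem nec_exp (a b c d : ℕ) (hb : 0 < b) (ha1 : 1 < a) (hc : 0 < c) (hd : 0 < d) (hdc : c < d)
    (haodd : Odd a)
    (g : ℝ × ℝ → ℝ) (hg : ∀ x t : ℝ, g (x, t) ^ a = t ^ b * x ^ c + x ^ d)
    (hC : ContDiff ℝ 1 g) (hba : b < a) (hbad : a * c ≤ d * (a - b)) : False := by
  have hdiff : Differentiable ℝ g := hC.differentiable one_ne_zero
  have hcont : Continuous (fderiv ℝ g) := (contDiff_one_iff_fderiv.mp hC).2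
  set B : ℝ × ℝ → ℝ := fun p => fderiv ℝ g p (0, 1) with hBdef
  have hBcont : Continuous B :=
    (ContinuousLinearMap.apply ℝ ℝ ((0:ℝ), (1:ℝ))).continuous.comp hcont
  have hcurve : ∀ x t : ℝ, HasDerivAt (fun s => g (x, s)) (B (x, t)) t := by
    intro x t
    have h1 : HasDerivAt (fun s : ℝ => (x, s)) (0, 1) t :=
      (hasDerivAt_const _ _).prodMk (hasDerivAt_id _)
    exact HasFDerivAt.comp_hasDerivAt (f := fun s : ℝ => (x, s)) _
      (hdiff (x, t)).hasFDerivAt h1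
  have hB0 : B (0, 0) = 0 := by
    have hzero : (fun s : ℝ => g (0, s)) = fun _ => (0:ℝ) := by
      funext s
      have h := hg 0 s
      rw [zero_pow hc.ne', zero_pow hd.ne', mul_zero, add_zero] at h
      exact pow_eq_zero_iff (by omega : a ≠ 0) |>.mp h
    have h1 := hcurve 0 0
    rw [hzero] at h1
    exact h1.unique (hasDerivAt_const _ _)
  have ha' : (0:ℝ) < a := by exact_mod_cast Nat.zero_lt_of_lt ha1
  have hb' : (0:ℝ) < b := by exact_mod_cast hb
  have hd' : (0:ℝ) < d := by exact_mod_cast hd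
  have hdc' : (c:ℝ) < d := by exact_mod_cast hdc
  set e : ℝ := ((d:ℝ) - c) / b with he
  have hepos : 0 < e := div_pos (by linarith) hb'
  set s : ℝ := ((a:ℝ) - 1) / a with hs
  have hs1 : s ≤ 1 := by rw [hs]; rw [div_le_one ha']; linarith
  set K : ℝ := (b:ℝ) / (2 * a) with hK
  have hKpos : 0 < K := by positivity
  have key : ∀ x : ℝ, 0 < x → x ≤ 1 → K ≤ B (x, x ^ e) := by
    intro x hx hx1
    set t : ℝ := x ^ e with ht
    have htb : t ^ b = x ^ (d - c) := by
      rw [ht, ← Real.rpow_natCast (x ^ e) b, ← Real.rpow_mul hx.le]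
      rw [he, div_mul_cancel₀ _ hb'.ne']
      rw [show ((d:ℝ) - c) = ((d - c : ℕ) : ℝ) by push_cast [Nat.cast_sub hdc.le]; ring]
      rw [Real.rpow_natCast]
    have htb1 : t ^ (b - 1) = x ^ (e * ((b:ℝ) - 1)) := by
      rw [ht, ← Real.rpow_natCast (x ^ e) (b - 1), ← Real.rpow_mul hx.le]
      congr 1
      push_cast [Nat.cast_sub hb]
      ring
    have hfval : t ^ b * x ^ c + x ^ d = 2 * x ^ d := by
      rw [htb, ← pow_add, Nat.sub_add_cancel hdc.le]; ring
    have hxd : (0:ℝ) < 2 * x ^ d := by positivity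
    have hgpow : g (x, t) ^ a = 2 * x ^ d := by rw [hg x t, hfval]
    have hroot : ((2 * x ^ d) ^ ((1:ℝ)/a)) ^ a = 2 * x ^ d := by
      rw [← Real.rpow_natCast ((2 * x ^ d) ^ ((1:ℝ)/a)) a, ← Real.rpow_mul hxd.le]
      rw [one_div_mul_cancel ha'.ne', Real.rpow_one]
    have hgval : g (x, t) = (2 * x ^ d) ^ ((1:ℝ)/a) := by
      apply (Odd.strictMono_pow (R := ℝ) haodd).injective
      simp only
      rw [hgpow, hroot]
    have hgpos : 0 < g (x, t) := by
      rw [hgval]; positivity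
    have heq : (a:ℝ) * g (x, t) ^ (a-1) * B (x, t) = (b:ℝ) * t ^ (b-1) * x ^ c := by
      have H1 : HasDerivAt (fun u => g (x, u) ^ a)
          ((a:ℝ) * g (x, t) ^ (a-1) * B (x, t)) t := (hcurve x t).pow a
      have H2 : HasDerivAt (fun u : ℝ => u ^ b * x ^ c + x ^ d)
          ((b:ℝ) * t ^ (b-1) * x ^ c) t :=
        ((hasDerivAt_pow b t).mul_const (x ^ c)).add_const (x ^ d)
      have hfun : (fun u => g (x, u) ^ a) = fun u : ℝ => u ^ b * x ^ c + x ^ d :=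
        funext fun u => hg x u
      rw [hfun] at H1
      exact H1.unique H2
    have hga1 : g (x, t) ^ (a - 1) = (2 * x ^ d) ^ (s : ℝ) := by
      rw [hgval, ← Real.rpow_natCast ((2 * x ^ d) ^ ((1:ℝ)/a)) (a-1), ← Real.rpow_mul hxd.le]
      congr 1
      rw [hs]
      push_cast [Nat.cast_sub ha1.le]
      field_simp
    have hsplit : (2 * x ^ d) ^ (s:ℝ) = 2 ^ (s:ℝ) * x ^ ((d:ℝ) * s) := by
      rw [Real.mul_rpow (by norm_num) (by positivity)]
      congr 1
      rw [← Real.rpow_natCast x d, ← Real.rpow_mul hx.le]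
    have h2s : (2:ℝ) ^ (s:ℝ) ≤ 2 := by
      calc (2:ℝ) ^ (s:ℝ) ≤ 2 ^ (1:ℝ) := Real.rpow_le_rpow_of_exponent_le one_le_two hs1
      _ = 2 := Real.rpow_one 2
    have hBval : B (x, t) = ((b:ℝ) * t ^ (b-1) * x ^ c) / ((a:ℝ) * g (x, t) ^ (a-1)) := by
      rw [eq_div_iff (by positivity)]
      linarith [heq]
    have hdenpos : (0:ℝ) < (a:ℝ) * g (x, t) ^ (a - 1) := by positivity
    have hden_le : (a:ℝ) * g (x, t) ^ (a-1) ≤ 2 * a * x ^ ((d:ℝ) * s) := by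
      rw [hga1, hsplit]
      have hxds : (0:ℝ) ≤ x ^ ((d:ℝ)*s) := Real.rpow_nonneg hx.le _
      calc (a:ℝ) * ((2:ℝ) ^ (s:ℝ) * x ^ ((d:ℝ)*s))
          ≤ (a:ℝ) * (2 * x ^ ((d:ℝ)*s)) :=
            mul_le_mul_of_nonneg_left (mul_le_mul_of_nonneg_right h2s hxds) ha'.le
        _ = 2 * a * x ^ ((d:ℝ)*s) := by ring
    have hnum : (b:ℝ) * t ^ (b-1) * x ^ c = (b:ℝ) * x ^ (e * ((b:ℝ)-1) + c) := by
      rw [htb1, Real.rpow_add hx, Real.rpow_natCast]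
      ring
    have hnumpos : (0:ℝ) ≤ (b:ℝ) * x ^ (e * ((b:ℝ)-1) + c) := by
      have := Real.rpow_nonneg hx.le (e * ((b:ℝ)-1) + c)
      positivity
    have step1 : ((b:ℝ) * x ^ (e * ((b:ℝ)-1) + c)) / (2 * a * x ^ ((d:ℝ)*s)) ≤ B (x, t) := by
      rw [hBval, hnum]
      exact div_le_div_of_nonneg_left hnumpos hdenpos hden_le
    have hcast : (a:ℝ) * c ≤ (d:ℝ) * ((a:ℝ) - b) := by
      have h2 : ((a * c : ℕ) : ℝ) ≤ ((d * (a - b) : ℕ) : ℝ) := by exact_mod_cast hbad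
      push_cast [Nat.cast_sub hba.le] at h2
      linarith
    have hab : (0:ℝ) < (a:ℝ) * b := by positivity
    have hE : e * ((b:ℝ)-1) + c - (d:ℝ) * s ≤ 0 := by
      have hprod : (e * ((b:ℝ)-1) + c - (d:ℝ) * s) * ((a:ℝ) * b) =
          (a:ℝ)*c + (b:ℝ)*d - (a:ℝ)*d := by
        rw [he, hs]
        field_simp
        ring
      have hS : (e * ((b:ℝ)-1) + c - (d:ℝ) * s) * ((a:ℝ) * b) ≤ 0 := by
        rw [hprod]; linarith [hcast]
      exact le_of_mul_le_mul_right (by rw [zero_mul]; exact hS) hab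
    have hone : (1:ℝ) ≤ x ^ (e * ((b:ℝ)-1) + c - (d:ℝ)*s) :=
      Real.one_le_rpow_of_pos_of_le_one_of_nonpos hx hx1 hE
    have heq2 : ((b:ℝ) * x ^ (e * ((b:ℝ)-1) + c)) / (2 * a * x ^ ((d:ℝ)*s)) =
        K * x ^ (e * ((b:ℝ)-1) + c - (d:ℝ)*s) := by
      rw [Real.rpow_sub hx, hK]
      field_simp
    have step2 : K ≤ ((b:ℝ) * x ^ (e * ((b:ℝ)-1) + c)) / (2 * a * x ^ ((d:ℝ)*s)) := by
      rw [heq2]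
      exact le_mul_of_one_le_right hKpos.le hone
    exact le_trans step2 step1
  -- limit contradiction
  have hp : Tendsto (fun x : ℝ => (x, x ^ e)) (𝓝[>] (0:ℝ)) (𝓝 ((0:ℝ), (0:ℝ))) := by
    apply Tendsto.prodMk_nhds
    · exact tendsto_id.mono_right nhdsWithin_le_nhds
    · have hcnt : Tendsto (fun x : ℝ => x ^ e) (𝓝 (0:ℝ)) (𝓝 ((0:ℝ) ^ e)) :=
        (Real.continuousAt_rpow_const 0 e (Or.inr hepos.le)).tendsto
      rw [Real.zero_rpow hepos.ne'] at hcnt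
      exact hcnt.mono_left nhdsWithin_le_nhds
  have hlim : Tendsto (fun x : ℝ => B (x, x ^ e)) (𝓝[>] (0:ℝ)) (𝓝 0) := by
    have := (hBcont.tendsto ((0:ℝ),(0:ℝ))).comp hp
    rwa [hB0] at this
  have h1 : ∀ᶠ x in 𝓝[>] (0:ℝ), B (x, x ^ e) < K := hlim.eventually_lt_const hKpos
  have h2 : ∀ᶠ x in 𝓝[>] (0:ℝ), 0 < x := self_mem_nhdsWithin
  have h3 : ∀ᶠ x in 𝓝[>] (0:ℝ), x ≤ 1 := by
    filter_upwards [Ioc_mem_nhdsGT_of_mem (Set.mem_Ico.mpr ⟨le_refl 0, zero_lt_one⟩)]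
      with x hx
    exact hx.2
  obtain ⟨x, hx1, hx2, hx3⟩ := (h1.and (h2.and h3)).exists
  linarith [key x hx2 hx3]


/-- For a odd, a > 1 and d > c, the real a-th root g(x,t) = (t^b·x^c + x^d)^{1/a}
(characterised by g(x,t)^a = t^b·x^c + x^d) is C¹ on ℝ² if and only if
a ≤ c, (a ≤ b or d·(a−b) < a·c), b is even and d − c is even. -/
theorem c1_root_characterisation (a b c d : ℕ) (ha : 0 < a) (hb : 0 < b) (hc : 0 < c)
    (hd : 0 < d) (ha1 : 1 < a) (haodd : Odd a) (hdc : c < d)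
    (g : ℝ × ℝ → ℝ)
    (hg : ∀ x t : ℝ, g (x, t) ^ a = t ^ b * x ^ c + x ^ d) :
    ContDiff ℝ 1 g ↔
      (a ≤ c ∧ (a ≤ b ∨ d * (a - b) < a * c) ∧ Even b ∧ Even (d - c)) := by
  constructor
  · intro hC
    refine ⟨nec_a_le_c a b c d hb ha1 hc hd hdc g hg hC, ?_,
      nec_even_b a b c d hb ha1 haodd hc hd g hg hC,
      nec_even_dc a b c d hb ha1 hc hd hdc g hg hC⟩
    by_cases hab : a ≤ b
    · exact Or.inl hab
    · right
      by_contra hcon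
      push_neg at hcon
      exact nec_exp a b c d hb ha1 hc hd hdc haodd g hg hC (by omega) hcon
  · rintro ⟨h1, h2, h3, h4⟩
    exact suffice a b c d hb hc hd ha1 haodd hdc g hg h1 h2 h3 h4
end
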